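/- arXiv:2011.14071 — 5 statements merged into one kernel-verified Lean document; each statement's English description precedes it below -/
import Mathlib

section
/- Let G be a finite group. If the number of distinct element centralizers of G equals the index [G : Z(G)], then the quotient G/Z(G) is an elementary abelian 2-group. -/
/-- The set of element centralizers of `G`. -/
def cent (G : Type*) [Group G] : Set (Subgroup G) :=
  Set.range fun x : G => Subgroup.centralizer {x}

/-- The number of distinct element centralizers of `G`. -/
noncomputable def numCent (G : Type*) [Group G] : ℕ := (cent G).ncard

/-- The center of the centralizer `C(x)`, viewed as a subgroup of `G`. -/
def centerCentralizer {G : Type*} [Group G] (x : G) : Subgroup G :=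
  Subgroup.centralizer {x} ⊓
    Subgroup.centralizer ((Subgroup.centralizer {x} : Subgroup G) : Set G)

/-- `G` is an F-group: for non-central `x, y`, `C(x) ≤ C(y)` implies `C(x) = C(y)`. -/
def IsFGroup (G : Type*) [Group G] : Prop :=
  ∀ x y : G, x ∉ Subgroup.center G → y ∉ Subgroup.center G →
    Subgroup.centralizer {x} ≤ Subgroup.centralizer {y} →
    Subgroup.centralizer ({x} : Set G) = Subgroup.centralizer {y}

/-- The set of conjugates of a subgroup `H` of `G`. -/
def conjugates {G : Type*} [Group G] (H : Subgroup G) : Set (Subgroup G) :=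
  {K | ∃ g : G, K = Subgroup.map (MulAut.conj g).toMonoidHom H}

/-- The number of `z`-classes of `G`: elements are `z`-equivalent when their
centralizers are conjugate in `G`, so the number of `z`-classes is the number of
distinct conjugacy classes of element centralizers. -/
noncomputable def numZClasses (G : Type*) [Group G] : ℕ :=
  (Set.range fun x : G => conjugates (Subgroup.centralizer {x})).ncard

lemma inj_of_card_range {α β : Type*} [Finite α] (f : α → β)
    (h : Nat.card (Set.range f) = Nat.card α) : Function.Injective f := by
  have hs : Function.Surjective (Set.rangeFactorization f) := Set.rangeFactorization_surjective
  have : Function.Bijective (Set.rangeFactorization f) :=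
    (Nat.bijective_iff_surjective_and_card _).2 ⟨hs, h.symm⟩
  exact fun a b hab => this.1 (Subtype.ext hab)

lemma centralizer_eq_of_center {G : Type*} [Group G] {x y : G}
    (hxy : x⁻¹ * y ∈ Subgroup.center G) :
    Subgroup.centralizer ({x} : Set G) = Subgroup.centralizer {y} := by
  have hz : ∀ g : G, Commute (x⁻¹ * y) g := fun g =>
    (Subgroup.mem_center_iff.1 hxy g).symm
  have hy : y = x * (x⁻¹ * y) := by group
  ext g
  simp only [Subgroup.mem_centralizer_iff, Set.mem_singleton_iff, forall_eq]
  constructor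
  · intro hg
    have : Commute y g := by rw [hy]; exact Commute.mul_left hg (hz g)
    exact this
  · intro (hg : Commute y g)
    have hx : x = y * (x⁻¹ * y)⁻¹ := by group
    have : Commute x g := by rw [hx]; exact Commute.mul_left hg ((hz g).inv_left)
    exact this

lemma centralizer_inv {G : Type*} [Group G] (x : G) :
    Subgroup.centralizer ({x} : Set G) = Subgroup.centralizer {x⁻¹} := by
  ext g
  simp only [Subgroup.mem_centralizer_iff, Set.mem_singleton_iff, forall_eq]
  exact ⟨fun hg => (Commute.inv_left_iff.2 hg : Commute x⁻¹ g),
    fun hg => (Commute.inv_left_iff.1 (hg : Commute x⁻¹ g) : Commute x g)⟩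

theorem stmt2 (G : Type*) [Group G] [Finite G]
    (h : numCent G = (Subgroup.center G).index) :
    (∀ a b : G ⧸ Subgroup.center G, a * b = b * a) ∧
      (∀ a : G ⧸ Subgroup.center G, a ^ 2 = 1) := by
  set Z := Subgroup.center G
  -- the induced map on the quotient
  let f : G ⧸ Z → Subgroup G := fun q =>
    Quotient.liftOn' q (fun x => Subgroup.centralizer {x}) fun a b hab =>
      centralizer_eq_of_center (QuotientGroup.leftRel_apply.1 hab)
  have hcomp : (fun x : G => Subgroup.centralizer ({x} : Set G)) =
      f ∘ (QuotientGroup.mk : G → G ⧸ Z) := rfl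
  have hrange : Set.range f = cent G := by
    rw [cent, hcomp, Function.Surjective.range_comp QuotientGroup.mk_surjective f]
  have hcard : Nat.card (Set.range f) = Nat.card (G ⧸ Z) := by
    rw [hrange, Nat.card_coe_set_eq]
    exact h
  have hinj : Function.Injective f := inj_of_card_range f hcard
  have key : ∀ a : G ⧸ Z, a ^ 2 = 1 := by
    intro a
    obtain ⟨x, rfl⟩ := QuotientGroup.mk_surjective a
    have : f (QuotientGroup.mk x) = f (QuotientGroup.mk x⁻¹) := centralizer_inv x
    have hx : (QuotientGroup.mk x : G ⧸ Z) = QuotientGroup.mk x⁻¹ := hinj this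
    rw [sq]
    nth_rewrite 2 [hx]
    rw [← QuotientGroup.mk_mul, mul_inv_cancel, QuotientGroup.mk_one]
  refine ⟨fun a b => ?_, key⟩
  have ha : a⁻¹ = a := by
    have := key a; rw [sq] at this
    exact inv_eq_of_mul_eq_one_right this
  have hb : b⁻¹ = b := by
    have := key b; rw [sq] at this
    exact inv_eq_of_mul_eq_one_right this
  have hab : (a * b)⁻¹ = a * b := by
    have := key (a * b); rw [sq] at this
    exact inv_eq_of_mul_eq_one_right this
  calc a * b = (a * b)⁻¹ := hab.symm
    _ = b⁻¹ * a⁻¹ := mul_inv_rev a b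
    _ = b * a := by rw [ha, hb]
end

section
/- Let G be a finite group with nontrivial center quotient, and let p be the smallest prime divisor of |G|. If G is non-abelian, then |Cent(G)| ≥ p + 2, with equality if and only if G/Z(G) ≅ C_p × C_p. -/
open Subgroup

section Aux

variable {G : Type*} [Group G] [Finite G] {p : ℕ}

/-- A subgroup of `H ≤ K` with the same (finite) cardinality is equal to it. -/
lemma subgroup_eq_of_le_of_card_le {H K : Subgroup G} (h : H ≤ K)
    (hc : Nat.card K ≤ Nat.card H) : H = K := by
  apply SetLike.coe_injective
  apply Set.eq_of_subset_of_ncard_le h _ (Set.toFinite _)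
  rwa [← Nat.card_coe_set_eq, ← Nat.card_coe_set_eq]


lemma mem_toFinset_subgroup {H : Subgroup G} {g : G} :
    g ∈ (Set.toFinite (H : Set G)).toFinset ↔ g ∈ H := by
  rw [Set.Finite.mem_toFinset, SetLike.mem_coe]

lemma card_toFinset_subgroup (H : Subgroup G) :
    (Set.toFinite (H : Set G)).toFinset.card = Nat.card H := by
  rw [← Set.ncard_eq_toFinset_card (H : Set G) (Set.toFinite _), ← Nat.card_coe_set_eq]
  rfl

/-- A proper subgroup has cardinality at most `|G| / p` when `p` is the smallest
prime divisor of `|G|`. -/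
lemma aux_mul_card_le (hmin : ∀ q : ℕ, q.Prime → q ∣ Nat.card G → p ≤ q)
    {H : Subgroup G} (hH : H ≠ ⊤) : p * Nat.card H ≤ Nat.card G := by
  have h1 : H.index * Nat.card H = Nat.card G := H.index_mul_card
  have hne : H.index ≠ 1 := fun h => hH (Subgroup.index_eq_one.mp h)
  have h0 : H.index ≠ 0 := Subgroup.index_ne_zero_of_finite
  have hq : (H.index).minFac.Prime := Nat.minFac_prime hne
  have hdvd2 : (H.index).minFac ∣ Nat.card G := (Nat.minFac_dvd _).trans H.index_dvd_card
  have hple : p ≤ H.index :=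
    le_trans (hmin _ hq hdvd2) (Nat.minFac_le (Nat.pos_of_ne_zero h0))
  calc p * Nat.card H ≤ H.index * Nat.card H := Nat.mul_le_mul_right _ hple
  _ = Nat.card G := h1

/-- Any cover of `G` by proper subgroups has at least `p + 1` members. -/
lemma aux_cover_lb (hp : p.Prime) (hdvd : p ∣ Nat.card G)
    (hmin : ∀ q : ℕ, q.Prime → q ∣ Nat.card G → p ≤ q)
    (S : Finset (Subgroup G)) (hS : ∀ H ∈ S, H ≠ ⊤)
    (hcov : ∀ g : G, ∃ H ∈ S, g ∈ H) : p + 1 ≤ S.card := by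
  classical
  have hFin : Fintype G := Fintype.ofFinite G
  by_contra hlt
  push_neg at hlt
  have hn : S.card ≤ p := by omega
  have ha2 : 2 ≤ Nat.card G := hp.two_le.trans (Nat.le_of_dvd Nat.card_pos hdvd)
  obtain ⟨m, hmp⟩ : ∃ m, p * m = Nat.card G := ⟨_, Nat.mul_div_cancel' hdvd⟩
  have hm1 : 1 ≤ m := by
    rcases Nat.eq_zero_or_pos m with h | h
    · rw [h, Nat.mul_zero] at hmp; omega
    · exact h
  -- the finsets of the subgroups minus the identity
  let f : Subgroup G → Finset G := fun H => (Set.toFinite (H : Set G)).toFinset.erase 1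
  have hfcard : ∀ H : Subgroup G, (f H).card = Nat.card H - 1 := by
    intro H
    rw [Finset.card_erase_of_mem (mem_toFinset_subgroup.mpr H.one_mem),
      card_toFinset_subgroup]
  have hsub : Finset.univ.erase (1 : G) ⊆ S.biUnion f := by
    intro g hg
    have hg1 : g ≠ 1 := (Finset.mem_erase.mp hg).1
    obtain ⟨H, hHS, hgH⟩ := hcov g
    exact Finset.mem_biUnion.mpr ⟨H, hHS,
      Finset.mem_erase.mpr ⟨hg1, mem_toFinset_subgroup.mpr hgH⟩⟩
  have hcount : Nat.card G - 1 ≤ ∑ H ∈ S, (Nat.card H - 1) := by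
    calc Nat.card G - 1 = (Finset.univ.erase (1 : G)).card := by
          rw [Finset.card_erase_of_mem (Finset.mem_univ _), Finset.card_univ,
            ← Nat.card_eq_fintype_card]
    _ ≤ (S.biUnion f).card := Finset.card_le_card hsub
    _ ≤ ∑ H ∈ S, (f H).card := Finset.card_biUnion_le
    _ = ∑ H ∈ S, (Nat.card H - 1) := Finset.sum_congr rfl fun H _ => hfcard H
  have hterm : ∀ H ∈ S, Nat.card H - 1 ≤ m - 1 := by
    intro H hH
    have hmul := aux_mul_card_le hmin (hS H hH)
    have hle : Nat.card H ≤ m := by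
      by_contra hc
      push_neg at hc
      have : p * m < p * Nat.card H := (Nat.mul_lt_mul_left hp.pos).mpr hc
      omega
    omega
  have hsum2 : ∑ H ∈ S, (Nat.card H - 1) ≤ S.card * (m - 1) := by
    calc ∑ H ∈ S, (Nat.card H - 1) ≤ ∑ _H ∈ S, (m - 1) := Finset.sum_le_sum hterm
    _ = S.card * (m - 1) := by rw [Finset.sum_const, smul_eq_mul]
  have hprod : S.card * (m - 1) = S.card * m - S.card := by
    rw [Nat.mul_sub, Nat.mul_one]
  have hsm : S.card * m ≤ p * m := Nat.mul_le_mul_right _ hn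
  have hsmm : S.card ≤ S.card * m := Nat.le_mul_of_pos_right _ (by omega)
  have hcard1 : S.card ≤ 1 := by omega
  -- but then a single proper subgroup covers G
  have hne : S.Nonempty := by
    obtain ⟨H, hHS, _⟩ := hcov 1
    exact ⟨H, hHS⟩
  have : S.card = 1 := le_antisymm hcard1 (Finset.card_pos.mpr hne)
  obtain ⟨H, hH⟩ := Finset.card_eq_one.mp this
  have : H = ⊤ := by
    rw [eq_top_iff']
    intro g
    obtain ⟨K, hKS, hgK⟩ := hcov g
    rw [hH, Finset.mem_singleton] at hKS
    rwa [hKS] at hgK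
  exact hS H (by rw [hH]; exact Finset.mem_singleton_self H) this

/-- In a cover by proper subgroups, the whole group is bounded by the sum of the
cardinalities of the other subgroups. -/
lemma aux_sum_others [DecidableEq (Subgroup G)]
    (hmin : ∀ q : ℕ, q.Prime → q ∣ Nat.card G → p ≤ q)
    (S : Finset (Subgroup G)) (hS : ∀ H ∈ S, H ≠ ⊤)
    (hcov : ∀ g : G, ∃ H ∈ S, g ∈ H) {H : Subgroup G} (hH : H ∈ S) :
    Nat.card G ≤ ∑ K ∈ S.erase H, Nat.card K := by
  classical
  have hFin : Fintype G := Fintype.ofFinite G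
  have hdcard : H.index * Nat.card H = Nat.card G := H.index_mul_card
  have hd0 : H.index ≠ 0 := Subgroup.index_ne_zero_of_finite
  have hd1 : H.index ≠ 1 := fun h => hS H hH (Subgroup.index_eq_one.mp h)
  have hd2 : 2 ≤ H.index := by omega
  set d := H.index with hd_def
  -- finsets
  let t : Subgroup G → Finset G := fun K => (Set.toFinite (K : Set G)).toFinset
  have hinter : ∀ K : Subgroup G, t K ∩ t H = t (K ⊓ H) := by
    intro K
    ext g
    simp only [Finset.mem_inter, t, mem_toFinset_subgroup, Subgroup.mem_inf]
  -- relindex bound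
  have hrel : ∀ K : Subgroup G, Nat.card K ≤ d * Nat.card (K ⊓ H : Subgroup G) := by
    intro K
    have h1 : ((K ⊓ H).subgroupOf K).index * Nat.card ((K ⊓ H).subgroupOf K) = Nat.card K :=
      Subgroup.index_mul_card _
    have h2 : Nat.card ((K ⊓ H).subgroupOf K) = Nat.card (K ⊓ H : Subgroup G) :=
      Nat.card_congr (Subgroup.subgroupOfEquivOfLe inf_le_left).toEquiv
    have h3 : ((K ⊓ H).subgroupOf K).index = H.relIndex K := by
      rw [← Subgroup.inf_relIndex_right H K, inf_comm]
      rfl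
    have h4 : H.relIndex K ≤ d := by
      have h5 := Subgroup.relIndex_le_of_le_right (le_top : K ≤ ⊤) (H := H)
      rw [Subgroup.relIndex_top_right] at h5
      exact h5 hd0
    calc Nat.card K = H.relIndex K * Nat.card (K ⊓ H : Subgroup G) := by
          rw [← h1, h2, h3]
    _ ≤ d * Nat.card (K ⊓ H : Subgroup G) := Nat.mul_le_mul_right _ h4
  -- cover of the complement
  have hsub : Finset.univ ⊆ t H ∪ (S.erase H).biUnion (fun K => t K \ t H) := by
    intro g _
    by_cases hgH : g ∈ H
    · exact Finset.mem_union_left _ (mem_toFinset_subgroup.mpr hgH)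
    · obtain ⟨K, hKS, hgK⟩ := hcov g
      have hKne : K ≠ H := fun h => hgH (h ▸ hgK)
      apply Finset.mem_union_right
      apply Finset.mem_biUnion.mpr ⟨K, Finset.mem_erase.mpr ⟨hKne, hKS⟩, ?_⟩
      exact Finset.mem_sdiff.mpr ⟨mem_toFinset_subgroup.mpr hgK,
        fun hc => hgH (mem_toFinset_subgroup.mp hc)⟩
  have hcount : Nat.card G ≤
      Nat.card H + ∑ K ∈ S.erase H, (Nat.card K - Nat.card (K ⊓ H : Subgroup G)) := by
    calc Nat.card G = Finset.univ.card := by rw [Finset.card_univ, ← Nat.card_eq_fintype_card]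
    _ ≤ (t H ∪ (S.erase H).biUnion (fun K => t K \ t H)).card := Finset.card_le_card hsub
    _ ≤ (t H).card + ((S.erase H).biUnion (fun K => t K \ t H)).card := Finset.card_union_le _ _
    _ ≤ (t H).card + ∑ K ∈ S.erase H, (t K \ t H).card :=
        Nat.add_le_add_left Finset.card_biUnion_le _
    _ = Nat.card H + ∑ K ∈ S.erase H, (Nat.card K - Nat.card (K ⊓ H : Subgroup G)) := by
        rw [card_toFinset_subgroup]
        congr 1
        refine Finset.sum_congr rfl fun K _ => ?_
        have h6 := Finset.card_sdiff_add_card_inter (t K) (t H)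
        rw [hinter K, card_toFinset_subgroup, card_toFinset_subgroup] at h6
        omega
  -- multiply through by `d`
  have step : d * Nat.card G ≤ Nat.card G + (d - 1) * ∑ K ∈ S.erase H, Nat.card K := by
    calc d * Nat.card G ≤ d * (Nat.card H + ∑ K ∈ S.erase H,
          (Nat.card K - Nat.card (K ⊓ H : Subgroup G))) := Nat.mul_le_mul_left _ hcount
    _ = Nat.card G + d * ∑ K ∈ S.erase H, (Nat.card K - Nat.card (K ⊓ H : Subgroup G)) := by
        rw [Nat.mul_add, hdcard]
    _ = Nat.card G + ∑ K ∈ S.erase H, d * (Nat.card K - Nat.card (K ⊓ H : Subgroup G)) := by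
        rw [Finset.mul_sum]
    _ ≤ Nat.card G + ∑ K ∈ S.erase H, (d - 1) * Nat.card K := by
        apply Nat.add_le_add_left
        apply Finset.sum_le_sum
        intro K _
        have h6 : Nat.card K ≤ d * Nat.card (K ⊓ H : Subgroup G) := hrel K
        have h7 : d * (Nat.card K - Nat.card (K ⊓ H : Subgroup G))
            = d * Nat.card K - d * Nat.card (K ⊓ H : Subgroup G) := Nat.mul_sub d _ _
        have h8 : (d - 1) * Nat.card K = d * Nat.card K - Nat.card K := by
          rw [Nat.sub_mul, Nat.one_mul]
        have h9 : Nat.card K ≤ d * Nat.card K := Nat.le_mul_of_pos_left _ (by omega)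
        have h10 : d * Nat.card (K ⊓ H : Subgroup G) ≤ d * Nat.card K :=
          Nat.mul_le_mul_left _ (Subgroup.card_le_of_le inf_le_left)
        omega
    _ = Nat.card G + (d - 1) * ∑ K ∈ S.erase H, Nat.card K := by rw [Finset.mul_sum]
  have h11 : (d - 1) * Nat.card G = d * Nat.card G - Nat.card G := by
    rw [Nat.sub_mul, Nat.one_mul]
  have h12 : Nat.card G ≤ d * Nat.card G := Nat.le_mul_of_pos_left _ (by omega)
  have hmain : (d - 1) * Nat.card G ≤ (d - 1) * ∑ K ∈ S.erase H, Nat.card K := by omega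
  exact Nat.le_of_mul_le_mul_left hmain (by omega)

/-- In a cover of `G` by exactly `p + 1` proper subgroups, every member has index `p`. -/
lemma aux_index_eq (hp : p.Prime) (hdvd : p ∣ Nat.card G)
    (hmin : ∀ q : ℕ, q.Prime → q ∣ Nat.card G → p ≤ q)
    (S : Finset (Subgroup G)) (hS : ∀ H ∈ S, H ≠ ⊤)
    (hcov : ∀ g : G, ∃ H ∈ S, g ∈ H) (hcard : S.card = p + 1) :
    ∀ H ∈ S, p * Nat.card H = Nat.card G := by
  classical
  intro H0 hH0
  obtain ⟨m, hmp⟩ : ∃ m, p * m = Nat.card G := ⟨_, Nat.mul_div_cancel' hdvd⟩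
  have hcardle : ∀ K ∈ S, Nat.card K ≤ m := by
    intro K hK
    have hmul := aux_mul_card_le hmin (hS K hK)
    by_contra hc
    push_neg at hc
    have : p * m < p * Nat.card K := (Nat.mul_lt_mul_left hp.pos).mpr hc
    omega
  -- pick another element of S
  have h1lt : 1 < S.card := by have := hp.two_le; omega
  obtain ⟨A, hA, B, hB, hAB⟩ := Finset.one_lt_card.mp h1lt
  have hpick : ∃ H ∈ S, H ≠ H0 := by
    by_cases h : A = H0
    · exact ⟨B, hB, fun hc => hAB (h.trans hc.symm)⟩
    · exact ⟨A, hA, h⟩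
  obtain ⟨H, hH, hHne⟩ := hpick
  have hH0mem : H0 ∈ S.erase H := Finset.mem_erase.mpr ⟨hHne.symm, hH0⟩
  have hsum := aux_sum_others hmin S hS hcov hH
  have hecard : (S.erase H).card = p := by
    rw [Finset.card_erase_of_mem hH, hcard]
    omega
  have hsumle : ∑ K ∈ S.erase H, Nat.card K ≤ p * m := by
    calc ∑ K ∈ S.erase H, Nat.card K ≤ ∑ _K ∈ S.erase H, m :=
          Finset.sum_le_sum fun K hK => hcardle K (Finset.mem_of_mem_erase hK)
    _ = p * m := by rw [Finset.sum_const, smul_eq_mul, hecard]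
  have hsumeq : ∑ K ∈ S.erase H, Nat.card K = p * m := by omega
  -- each term must equal m
  have hterm : Nat.card H0 = m := by
    by_contra hne
    have hlt : Nat.card H0 < m :=
      lt_of_le_of_ne (hcardle H0 hH0) hne
    have hcontra : ∑ K ∈ S.erase H, Nat.card K < ∑ _K ∈ S.erase H, m := by
      apply Finset.sum_lt_sum (fun K hK => hcardle K (Finset.mem_of_mem_erase hK))
      exact ⟨H0, hH0mem, hlt⟩
    rw [Finset.sum_const, smul_eq_mul, hecard] at hcontra
    omega
  rw [hterm, hmp]

/-- A subgroup of index `p`, the smallest prime divisor of `|G|`, is normal. -/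
lemma aux_normal (hp : p.Prime)
    (hmin : ∀ q : ℕ, q.Prime → q ∣ Nat.card G → p ≤ q)
    {H : Subgroup G} (hidx : H.index = p) : H.Normal := by
  classical
  have h2p := hp.two_le
  set φ := MulAction.toPermHom G (G ⧸ H) with hφ
  have hker : H.normalCore = φ.ker := Subgroup.normalCore_eq_ker H
  have hKH : φ.ker ≤ H := hker ▸ H.normalCore_le
  have hcardQ : Nat.card (G ⧸ H) = p := by rw [← Subgroup.index_eq_card, hidx]
  have hpermcard : Nat.card (Equiv.Perm (G ⧸ H)) = p.factorial := by
    have : Fintype (G ⧸ H) := Fintype.ofFinite _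
    rw [Nat.card_eq_fintype_card, Fintype.card_perm, ← Nat.card_eq_fintype_card, hcardQ]
  have hkeridx : φ.ker.index ∣ p.factorial := by
    rw [Subgroup.index_ker]
    calc Nat.card φ.range ∣ Nat.card (Equiv.Perm (G ⧸ H)) := Subgroup.card_subgroup_dvd_card _
    _ = p.factorial := by rw [hpermcard]
  set r := φ.ker.relIndex H with hr
  have hrel : r * p = φ.ker.index := by
    rw [hr, ← hidx]
    exact Subgroup.relIndex_mul_index hKH
  have hrdvd : r ∣ (p - 1).factorial := by
    have hfact : p.factorial = p * (p - 1).factorial := by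
      have hps : p = (p - 1) + 1 := by omega
      rw [hps]
      simp [Nat.factorial_succ]
    have hdd : r * p ∣ p * (p - 1).factorial := by rw [hrel, ← hfact]; exact hkeridx
    rw [mul_comm r p] at hdd
    exact (mul_dvd_mul_iff_left hp.pos.ne').mp hdd
  have hrG : r ∣ Nat.card G := by
    have h1 : r ∣ φ.ker.index := ⟨p, hrel.symm⟩
    exact h1.trans φ.ker.index_dvd_card
  have hr1 : r = 1 := by
    by_contra hr1
    have hr0 : r ≠ 0 := by
      intro h
      rw [h] at hrdvd
      have := Nat.factorial_pos (p - 1)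
      omega
    have hq : r.minFac.Prime := Nat.minFac_prime hr1
    have hq1 : r.minFac ∣ (p - 1).factorial := (Nat.minFac_dvd r).trans hrdvd
    have hq2 : r.minFac ≤ p - 1 := (Nat.Prime.dvd_factorial hq).mp hq1
    have hq3 : p ≤ r.minFac := hmin _ hq ((Nat.minFac_dvd r).trans hrG)
    omega
  have hHker : H ≤ φ.ker := Subgroup.relIndex_eq_one.mp hr1
  have heq : H = φ.ker := le_antisymm hHker hKH
  rw [heq]
  infer_instance

/-- A non-cyclic group of order `p ^ 2` is isomorphic to `C_p × C_p`. -/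
lemma aux_iso {Q : Type*} [Group Q] [Finite Q] (hp : p.Prime) (hcard : Nat.card Q = p ^ 2)
    (hnc : ¬ IsCyclic Q) : Nonempty (Q ≃* Multiplicative (ZMod p × ZMod p)) := by
  haveI : Fact p.Prime := ⟨hp⟩
  letI : CommGroup Q := IsPGroup.commGroupOfCardEqPrimeSq hcard
  have hexp : ∀ q : Q, q ^ p = 1 := by
    intro q
    have h1 : orderOf q ∣ p ^ 2 := hcard ▸ orderOf_dvd_natCard q
    obtain ⟨k, hk2, hkeq⟩ := (Nat.dvd_prime_pow hp).mp h1
    have hk1 : k ≤ 1 := by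
      by_contra hk
      have hk2' : k = 2 := by omega
      exact hnc (isCyclic_of_orderOf_eq_card q (by rw [hkeq, hk2', hcard]))
    apply orderOf_dvd_iff_pow_eq_one.mp
    rw [hkeq]
    simpa using pow_dvd_pow p hk1
  have hsmul : ∀ x : Additive Q, p • x = 0 := by
    intro x
    have := hexp (Additive.toMul x)
    apply Additive.toMul.injective
    simpa using this
  haveI : Module (ZMod p) (Additive Q) := AddCommGroup.zmodModule hsmul
  have : Fintype Q := Fintype.ofFinite Q
  have hfr : Module.finrank (ZMod p) (Additive Q) = 2 := by
    have hc := Module.card_eq_pow_finrank (K := ZMod p) (V := Additive Q)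
    rw [ZMod.card] at hc
    have hcQ : Fintype.card (Additive Q) = p ^ 2 := by
      rw [← Nat.card_eq_fintype_card, ← hcard]
      exact Nat.card_congr Additive.toMul
    rw [hcQ] at hc
    exact (Nat.pow_right_injective hp.two_le hc.symm)
  have hfr2 : Module.finrank (ZMod p) (ZMod p × ZMod p) = 2 := by
    simp [Module.finrank_prod]
  haveI : Finite (Additive Q) := Finite.of_equiv Q Additive.ofMul
  haveI : Module.Finite (ZMod p) (Additive Q) := Module.Finite.of_finite
  haveI : Module.Finite (ZMod p) (ZMod p × ZMod p) := Module.Finite.of_finite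
  obtain ⟨e⟩ := FiniteDimensional.nonempty_linearEquiv_of_finrank_eq (hfr.trans hfr2.symm)
  have eq1 : Q ≃* Multiplicative (Additive Q) := MulEquiv.refl _
  exact ⟨eq1.trans (AddEquiv.toMultiplicative e.toAddEquiv)⟩

end Aux

section Main

variable {G : Type*} [Group G] [Finite G]

/-- The set of proper centralizers. -/
private def propCent (G : Type*) [Group G] : Set (Subgroup G) :=
  (fun x : G => Subgroup.centralizer {x}) '' {x : G | x ∉ Subgroup.center G}

lemma top_notMem_propCent : ⊤ ∉ propCent G := by
  rintro ⟨x, hx, h⟩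
  exact hx (Set.singleton_subset_iff.mp (Subgroup.centralizer_eq_top_iff_subset.mp h))

lemma cent_eq_insert : cent G = insert ⊤ (propCent G) := by
  ext H
  simp only [cent, Set.mem_range, Set.mem_insert_iff, propCent, Set.mem_image, Set.mem_setOf_eq]
  constructor
  · rintro ⟨x, rfl⟩
    by_cases hx : x ∈ Subgroup.center G
    · left
      rw [Subgroup.centralizer_eq_top_iff_subset]
      exact Set.singleton_subset_iff.mpr hx
    · right; exact ⟨x, hx, rfl⟩
  · rintro (rfl | ⟨x, _, rfl⟩)
    · refine ⟨1, ?_⟩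
      rw [Subgroup.centralizer_eq_top_iff_subset]
      exact Set.singleton_subset_iff.mpr (Subgroup.one_mem _)
    · exact ⟨x, rfl⟩

lemma numCent_eq : numCent G = 1 + (propCent G).ncard := by
  rw [numCent, cent_eq_insert, Set.ncard_insert_of_notMem top_notMem_propCent
    (Set.toFinite _)]
  omega

lemma exists_noncentral (hna : ¬ ∀ a b : G, a * b = b * a) :
    ∃ x : G, x ∉ Subgroup.center G := by
  by_contra h
  push_neg at h
  exact hna fun a b => (Subgroup.mem_center_iff.mp (h b) a)

lemma propCent_cover (hna : ¬ ∀ a b : G, a * b = b * a) (g : G) :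
    ∃ H ∈ propCent G, g ∈ H := by
  by_cases hg : g ∈ Subgroup.center G
  · obtain ⟨x, hx⟩ := exists_noncentral hna
    exact ⟨Subgroup.centralizer {x}, ⟨x, hx, rfl⟩, Subgroup.center_le_centralizer {x} hg⟩
  · exact ⟨Subgroup.centralizer {g}, ⟨g, hg, rfl⟩,
      Subgroup.mem_centralizer_singleton_iff.mpr rfl⟩

lemma propCent_ne_top {H : Subgroup G} (hH : H ∈ propCent G) : H ≠ ⊤ :=
  fun h => top_notMem_propCent (h ▸ hH)

end Main

section Parts

variable {G : Type*} [Group G] [Finite G] {p : ℕ}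

/-- Lower bound: `numCent G ≥ p + 2`. -/
lemma numCent_lb (hp : p.Prime) (hdvd : p ∣ Nat.card G)
    (hmin : ∀ q : ℕ, q.Prime → q ∣ Nat.card G → p ≤ q)
    (hna : ¬ ∀ a b : G, a * b = b * a) : p + 2 ≤ numCent G := by
  classical
  have hPfin : (propCent G).Finite := Set.toFinite _
  set S := hPfin.toFinset with hS_def
  have hmemS : ∀ H : Subgroup G, H ∈ S ↔ H ∈ propCent G := fun H => hPfin.mem_toFinset
  have hlb := aux_cover_lb hp hdvd hmin S
    (fun H hH => propCent_ne_top ((hmemS H).mp hH))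
    (fun g => by
      obtain ⟨H, hH, hgH⟩ := propCent_cover hna g
      exact ⟨H, (hmemS H).mpr hH, hgH⟩)
  rw [numCent_eq]
  have : (propCent G).ncard = S.card := by
    rw [hS_def, Set.ncard_eq_toFinset_card _ hPfin]
  omega

/-- Backward direction: if `G/Z(G) ≅ C_p × C_p`, then `numCent G = p + 2`. -/
lemma numCent_of_iso (hp : p.Prime)
    (hna : ¬ ∀ a b : G, a * b = b * a)
    (e : (G ⧸ Subgroup.center G) ≃* Multiplicative (ZMod p × ZMod p)) :
    numCent G = p + 2 := by
  classical
  haveI : Fact p.Prime := ⟨hp⟩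
  set Z := Subgroup.center G with hZ_def
  set π := QuotientGroup.mk' Z with hπ_def
  set Q := G ⧸ Z with hQ_def
  have hcardQ : Nat.card Q = p ^ 2 := by
    rw [Nat.card_congr e.toEquiv]
    simp [Nat.card_prod, sq]
  have hexpQ : ∀ v : Q, v ^ p = 1 := by
    intro v
    apply e.injective
    rw [map_pow, map_one]
    have : ∀ w : Multiplicative (ZMod p × ZMod p), w ^ p = 1 := by
      intro w
      apply Multiplicative.toAdd.injective
      have : p • (Multiplicative.toAdd w) = 0 := by
        rcases Multiplicative.toAdd w with ⟨A, B⟩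
        have hA : p • A = 0 := by
          rw [nsmul_eq_mul]
          simp [ZMod.natCast_self]
        have hB : p • B = 0 := by
          rw [nsmul_eq_mul]
          simp [ZMod.natCast_self]
        simp [Prod.ext_iff, hA, hB]
      simpa using this
    exact this (e v)
  -- centralizers of non-central elements
  have hcent : ∀ x : G, x ∉ Z →
      Subgroup.centralizer {x} = Subgroup.comap π (Subgroup.zpowers (π x)) := by
    intro x hx
    have hx1 : (π x) ≠ 1 := by
      intro h
      exact hx ((QuotientGroup.eq_one_iff x).mp h)
    have hord : orderOf (π x) = p := orderOf_eq_prime (hexpQ _) hx1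
    have hcards : Nat.card (Subgroup.zpowers (π x)) = p := by
      rw [Nat.card_zpowers, hord]
    have hidxzp : (Subgroup.zpowers (π x)).index = p := by
      have h1 := (Subgroup.zpowers (π x)).index_mul_card
      rw [hcards, hcardQ, sq] at h1
      exact Nat.eq_of_mul_eq_mul_right hp.pos h1
    have hP0idx : (Subgroup.comap π (Subgroup.zpowers (π x))).index = p := by
      rw [Subgroup.index_comap_of_surjective _ (QuotientGroup.mk'_surjective Z), hidxzp]
    have hle : Subgroup.comap π (Subgroup.zpowers (π x)) ≤ Subgroup.centralizer {x} := by
      intro g hg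
      rw [Subgroup.mem_comap] at hg
      obtain ⟨k, hk⟩ := Subgroup.mem_zpowers_iff.mp hg
      have hc : x ^ k * g⁻¹ ∈ Z := by
        rw [hZ_def, ← QuotientGroup.eq_one_iff]
        have hcast : (↑(x ^ k * g⁻¹) : G ⧸ Subgroup.center G) = (π x) ^ k * (π g)⁻¹ := by
          simp [hπ_def]
          rfl
        rw [hcast, hk]
        simp
      have hcomm : ∀ w : G, w * (x ^ k * g⁻¹) = (x ^ k * g⁻¹) * w :=
        Subgroup.mem_center_iff.mp hc
      have hg' : g = (x ^ k * g⁻¹)⁻¹ * x ^ k := by group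
      rw [Subgroup.mem_centralizer_singleton_iff]
      have h1 : Commute x (x ^ k * g⁻¹) := hcomm x
      have h2 : Commute x ((x ^ k * g⁻¹)⁻¹ * x ^ k) :=
        Commute.mul_right h1.inv_right ((Commute.refl x).zpow_right k)
      rw [← hg'] at h2
      exact h2.symm.eq
    -- equality by index
    have hCne : Subgroup.centralizer {x} ≠ ⊤ := by
      intro h
      exact hx (Set.singleton_subset_iff.mp (Subgroup.centralizer_eq_top_iff_subset.mp h))
    have hCdvd : (Subgroup.centralizer {x}).index ∣ p := by
      rw [← hP0idx]
      exact Subgroup.index_dvd_of_le hle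
    have hCidx : (Subgroup.centralizer {x}).index = p := by
      rcases (Nat.dvd_prime hp).mp hCdvd with h | h
      · exact absurd (Subgroup.index_eq_one.mp h) hCne
      · exact h
    have hrel := Subgroup.relIndex_mul_index hle
    rw [hP0idx, hCidx] at hrel
    have hone : (Subgroup.comap π (Subgroup.zpowers (π x))).relIndex
        (Subgroup.centralizer {x}) = 1 :=
      Nat.eq_of_mul_eq_mul_right hp.pos (hrel.trans (one_mul p).symm)
    exact le_antisymm (Subgroup.relIndex_eq_one.mp hone) hle
  -- description of the proper centralizers
  have hprop : propCent G = (fun v : Q => Subgroup.comap π (Subgroup.zpowers v)) '' {v : Q | v ≠ 1} := by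
    ext H
    constructor
    · rintro ⟨x, hx, rfl⟩
      refine ⟨π x, ?_, (hcent x hx).symm⟩
      intro h
      exact hx ((QuotientGroup.eq_one_iff x).mp h)
    · rintro ⟨v, hv, rfl⟩
      obtain ⟨x, rfl⟩ := QuotientGroup.mk'_surjective Z v
      have hx : x ∉ Z := by
        intro h
        exact hv ((QuotientGroup.eq_one_iff x).mpr h)
      exact ⟨x, hx, hcent x hx⟩
  -- counting the lines
  have hcount : ((fun v : Q => Subgroup.zpowers v) '' {v : Q | v ≠ 1}).ncard = p + 1 := by
    have hFinQ : Fintype Q := Fintype.ofFinite Q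
    classical
    set s : Finset Q := Finset.univ.erase 1 with hs_def
    have hsset : {v : Q | v ≠ 1} = ↑s := by ext v; simp [hs_def]
    rw [hsset, ← Finset.coe_image, Set.ncard_coe_finset]
    have hord : ∀ v ∈ s, orderOf v = p := by
      intro v hv
      exact orderOf_eq_prime (hexpQ v) (Finset.mem_erase.mp hv).1
    have hzpcard : ∀ v ∈ s, Nat.card (Subgroup.zpowers v) = p := by
      intro v hv
      rw [Nat.card_zpowers, hord v hv]
    have hfiber : ∀ L ∈ s.image (fun v => Subgroup.zpowers v),
        (s.filter fun w => Subgroup.zpowers w = L).card = p - 1 := by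
      intro L hL
      obtain ⟨v, hv, rfl⟩ := Finset.mem_image.mp hL
      have heq : (s.filter fun w => Subgroup.zpowers w = Subgroup.zpowers v)
          = (Set.toFinite ((Subgroup.zpowers v : Subgroup Q) : Set Q)).toFinset.erase 1 := by
        ext w
        simp only [Finset.mem_filter, Finset.mem_erase, mem_toFinset_subgroup,
          hs_def, Finset.mem_univ, and_true, true_and]
        constructor
        · rintro ⟨hw1, hweq⟩
          exact ⟨hw1, hweq ▸ Subgroup.mem_zpowers w⟩
        · rintro ⟨hw1, hwmem⟩
          refine ⟨hw1, ?_⟩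
          have hle : Subgroup.zpowers w ≤ Subgroup.zpowers v := Subgroup.zpowers_le.mpr hwmem
          apply subgroup_eq_of_le_of_card_le hle
          rw [hzpcard v hv, Nat.card_zpowers]
          rw [orderOf_eq_prime (hexpQ w) hw1]
      rw [heq]
      rw [Finset.card_erase_of_mem (mem_toFinset_subgroup.mpr (Subgroup.one_mem _)),
        card_toFinset_subgroup]
      rw [hzpcard v hv]
    have hsum := Finset.card_eq_sum_card_image (fun v => Subgroup.zpowers v) s
    rw [Finset.sum_congr rfl hfiber, Finset.sum_const, smul_eq_mul] at hsum
    have hscard : s.card = p ^ 2 - 1 := by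
      rw [hs_def, Finset.card_erase_of_mem (Finset.mem_univ _), Finset.card_univ,
        ← Nat.card_eq_fintype_card, hcardQ]
    rw [hscard] at hsum
    -- p^2 - 1 = c * (p - 1) with c = card image ⇒ c = p + 1
    have hp2 : p ^ 2 = p * p := sq p
    have h2 := hp.two_le
    have key : (p + 1) * (p - 1) = p ^ 2 - 1 := by
      obtain ⟨q, rfl⟩ : ∃ q, p = q + 1 := ⟨p - 1, by omega⟩
      have h3 : (q + 1) ^ 2 = q * q + 2 * q + 1 := by ring
      have h4 : (q + 1 + 1) * (q + 1 - 1) = q * q + 2 * q := by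
        have : q + 1 - 1 = q := by omega
        rw [this]; ring
      omega
    rw [← key] at hsum
    have hp1pos : 0 < p - 1 := by omega
    exact (Nat.eq_of_mul_eq_mul_right hp1pos hsum).symm
  -- transfer to comap
  have hinj : Function.Injective (Subgroup.comap π) :=
    Subgroup.comap_injective (QuotientGroup.mk'_surjective Z)
  have himg : (fun v : Q => Subgroup.comap π (Subgroup.zpowers v)) '' {v : Q | v ≠ 1}
      = Subgroup.comap π '' ((fun v : Q => Subgroup.zpowers v) '' {v : Q | v ≠ 1}) := by
    rw [Set.image_image]
  have hPcard : (propCent G).ncard = p + 1 := by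
    rw [hprop, himg, Set.ncard_image_of_injective _ hinj, hcount]
  rw [numCent_eq, hPcard]
  omega

/-- Forward direction: if `numCent G = p + 2`, then `G/Z(G) ≅ C_p × C_p`. -/
lemma iso_of_numCent (hp : p.Prime) (hdvd : p ∣ Nat.card G)
    (hmin : ∀ q : ℕ, q.Prime → q ∣ Nat.card G → p ≤ q)
    (hna : ¬ ∀ a b : G, a * b = b * a) (hnum : numCent G = p + 2) :
    Nonempty ((G ⧸ Subgroup.center G) ≃* Multiplicative (ZMod p × ZMod p)) := by
  classical
  haveI : Fact p.Prime := ⟨hp⟩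
  set Z := Subgroup.center G with hZ_def
  have hPfin : (propCent G).Finite := Set.toFinite _
  set S := hPfin.toFinset with hS_def
  have hmemS : ∀ H : Subgroup G, H ∈ S ↔ H ∈ propCent G := fun H => hPfin.mem_toFinset
  have hS : ∀ H ∈ S, H ≠ ⊤ := fun H hH => propCent_ne_top ((hmemS H).mp hH)
  have hcov : ∀ g : G, ∃ H ∈ S, g ∈ H := fun g => by
    obtain ⟨H, hH, hgH⟩ := propCent_cover hna g
    exact ⟨H, (hmemS H).mpr hH, hgH⟩
  have hScard : S.card = p + 1 := by
    have h1 : numCent G = 1 + (propCent G).ncard := numCent_eq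
    have h2 : (propCent G).ncard = S.card := by
      rw [hS_def, Set.ncard_eq_toFinset_card _ hPfin]
    omega
  -- irredundance
  have hirr : ∀ H ∈ S, ∃ w ∈ H, ∀ K ∈ S, K ≠ H → w ∉ K := by
    intro H hH
    by_contra hcon
    push_neg at hcon
    have hcov' : ∀ g : G, ∃ K ∈ S.erase H, g ∈ K := by
      intro g
      obtain ⟨K, hKS, hgK⟩ := hcov g
      by_cases hKH : K = H
      · obtain ⟨K', hK'S, hK'ne, hgK'⟩ := hcon g (hKH ▸ hgK)
        exact ⟨K', Finset.mem_erase.mpr ⟨hK'ne, hK'S⟩, hgK'⟩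
      · exact ⟨K, Finset.mem_erase.mpr ⟨hKH, hKS⟩, hgK⟩
    have hlb := aux_cover_lb hp hdvd hmin (S.erase H)
      (fun K hK => hS K (Finset.mem_of_mem_erase hK)) hcov'
    rw [Finset.card_erase_of_mem hH, hScard] at hlb
    omega
  -- all indices are p
  have hidxall : ∀ H ∈ S, H.index = p := by
    intro H hH
    have h1 := aux_index_eq hp hdvd hmin S hS hcov hScard H hH
    have h2 := H.index_mul_card
    have h3 : 0 < Nat.card H := Nat.card_pos
    rw [← h1] at h2
    exact Nat.eq_of_mul_eq_mul_right h3 h2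
  -- pick two distinct members with their witnesses
  obtain ⟨H1, hH1, H2, hH2, hne12⟩ := Finset.one_lt_card.mp
    (by have := hp.two_le; omega : 1 < S.card)
  obtain ⟨x, hxH1, hxonly⟩ := hirr H1 hH1
  obtain ⟨y, hyH2, hyonly⟩ := hirr H2 hH2
  have hZle : ∀ K ∈ S, Z ≤ K := by
    intro K hK
    obtain ⟨z, _, rfl⟩ := (hmemS K).mp hK
    exact Subgroup.center_le_centralizer {z}
  have hxnc : x ∉ Z := by
    intro hx
    exact hxonly H2 hH2 (fun h => hne12 h.symm) (hZle H2 hH2 hx)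
  have hync : y ∉ Z := by
    intro hy
    exact hyonly H1 hH1 hne12 (hZle H1 hH1 hy)
  have hCx : Subgroup.centralizer {x} = H1 := by
    have hmem : Subgroup.centralizer {x} ∈ S := (hmemS _).mpr ⟨x, hxnc, rfl⟩
    by_contra hne
    exact hxonly _ hmem hne (Subgroup.mem_centralizer_singleton_iff.mpr rfl)
  have hCy : Subgroup.centralizer {y} = H2 := by
    have hmem : Subgroup.centralizer {y} ∈ S := (hmemS _).mpr ⟨y, hync, rfl⟩
    by_contra hne
    exact hyonly _ hmem hne (Subgroup.mem_centralizer_singleton_iff.mpr rfl)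
  -- H1 ⊓ H2 = Z
  have hinf : H1 ⊓ H2 = Z := by
    apply le_antisymm
    · rintro g ⟨hg1, hg2⟩
      by_contra hgnc
      have hCgS : Subgroup.centralizer {g} ∈ S := (hmemS _).mpr ⟨g, hgnc, rfl⟩
      have hxCg : x ∈ Subgroup.centralizer {g} := by
        rw [Subgroup.mem_centralizer_singleton_iff]
        rw [← hCx] at hg1
        exact (Subgroup.mem_centralizer_singleton_iff.mp hg1).symm
      have hyCg : y ∈ Subgroup.centralizer {g} := by
        rw [Subgroup.mem_centralizer_singleton_iff]
        rw [← hCy] at hg2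
        exact (Subgroup.mem_centralizer_singleton_iff.mp hg2).symm
      have hCgH1 : Subgroup.centralizer {g} = H1 := by
        by_contra hne
        exact hxonly _ hCgS hne hxCg
      exact hyonly H1 hH1 hne12 (hCgH1 ▸ hyCg)
    · exact le_inf (hZle H1 hH1) (hZle H2 hH2)
  haveI hn1 : H1.Normal := aux_normal hp hmin (hidxall H1 hH1)
  haveI hn2 : H2.Normal := aux_normal hp hmin (hidxall H2 hH2)
  -- card of G/Z divides p^2
  set f : G →* (G ⧸ H1) × (G ⧸ H2) := (QuotientGroup.mk' H1).prod (QuotientGroup.mk' H2)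
    with hf_def
  have hker : f.ker = Z := by
    rw [hf_def, MonoidHom.ker_prod, QuotientGroup.ker_mk', QuotientGroup.ker_mk', hinf]
  have hdvdQ : Nat.card (G ⧸ Z) ∣ p ^ 2 := by
    have hcc : Nat.card (G ⧸ Z) = Nat.card f.range := by
      rw [← hker]
      exact Nat.card_congr (QuotientGroup.quotientKerEquivRange f).toEquiv
    calc Nat.card (G ⧸ Z) = Nat.card f.range := hcc
    _ ∣ Nat.card ((G ⧸ H1) × (G ⧸ H2)) := Subgroup.card_subgroup_dvd_card _
    _ = p ^ 2 := by
        rw [Nat.card_prod, ← Subgroup.index_eq_card, ← Subgroup.index_eq_card,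
          hidxall H1 hH1, hidxall H2 hH2, sq]
  -- G/Z is not cyclic
  have hQnc : ¬ IsCyclic (G ⧸ Z) := by
    intro hcyc
    exact hna (commutative_of_cyclic_center_quotient (QuotientGroup.mk' Z)
      (by rw [QuotientGroup.ker_mk']))
  -- card G/Z = p^2
  obtain ⟨k, hk2, hkeq⟩ := (Nat.dvd_prime_pow hp).mp hdvdQ
  have hk2' : k = 2 := by
    interval_cases k
    · -- card = 1 : G abelian
      exfalso
      have h1 : Z.index = 1 := by
        rw [Subgroup.index_eq_card, hkeq, pow_zero]
      have h2 : Z = ⊤ := Subgroup.index_eq_one.mp h1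
      apply hna
      intro a b
      have : b ∈ Z := h2 ▸ Subgroup.mem_top b
      exact (Subgroup.mem_center_iff.mp this a)
    · -- card = p : cyclic
      exfalso
      rw [pow_one] at hkeq
      exact hQnc (isCyclic_of_prime_card hkeq)
    · rfl
  rw [hk2'] at hkeq
  exact aux_iso hp hkeq hQnc

end Parts

theorem stmt3 (G : Type*) [Group G] [Finite G] (p : ℕ) (hp : p.Prime)
    (hdvd : p ∣ Nat.card G)
    (hmin : ∀ q : ℕ, q.Prime → q ∣ Nat.card G → p ≤ q)
    (hna : ¬ ∀ a b : G, a * b = b * a) :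
    p + 2 ≤ numCent G ∧
      (numCent G = p + 2 ↔
        Nonempty ((G ⧸ Subgroup.center G) ≃* Multiplicative (ZMod p × ZMod p))) := by
  refine ⟨numCent_lb hp hdvd hmin hna, ?_, ?_⟩
  · exact iso_of_numCent hp hdvd hmin hna
  · rintro ⟨e⟩
    exact numCent_of_iso hp hna e
end

section
/- Let G be a finite F-group with [G : Z(G)] = p^k for a prime p. If [Z(C(x)) : Z(G)] = p^m for all non-central x ∈ G, then the number of distinct element centralizers of G equals (p^k − 1)/(p^m − 1) + 1. -/
section aux
variable {G : Type*} [Group G]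

lemma mem_cc_self (x : G) : x ∈ centerCentralizer x := by
  refine Subgroup.mem_inf.2 ⟨?_, ?_⟩
  · exact Subgroup.mem_centralizer_iff.2 (by rintro h rfl; rfl)
  · exact Subgroup.mem_centralizer_iff.2 fun g hg =>
      (Subgroup.mem_centralizer_iff.1 hg x rfl).symm

lemma center_le_cc (x : G) : Subgroup.center G ≤ centerCentralizer x :=
  le_inf (Subgroup.center_le_centralizer _) (Subgroup.center_le_centralizer _)

lemma cc_le_centralizer {x y : G} (hy : y ∈ centerCentralizer x) :
    Subgroup.centralizer {x} ≤ Subgroup.centralizer {y} := by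
  intro g hg
  refine Subgroup.mem_centralizer_iff.2 ?_
  rintro h rfl
  exact (Subgroup.mem_centralizer_iff.1 (Subgroup.mem_inf.1 hy).2 g hg).symm

lemma cc_congr {x y : G}
    (h : Subgroup.centralizer {x} = Subgroup.centralizer ({y} : Set G)) :
    centerCentralizer x = centerCentralizer y := by
  unfold centerCentralizer; rw [h]

lemma centralizer_eq_top_iff {x : G} :
    Subgroup.centralizer ({x} : Set G) = ⊤ ↔ x ∈ Subgroup.center G := by
  rw [Subgroup.centralizer_eq_top_iff_subset, Set.singleton_subset_iff, SetLike.mem_coe]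

lemma fiber_eq (hF : IsFGroup G) {x : G} (hx : x ∉ Subgroup.center G) :
    {y : G | y ∉ Subgroup.center G ∧
        Subgroup.centralizer {y} = Subgroup.centralizer ({x} : Set G)}
      = (centerCentralizer x : Set G) \ (Subgroup.center G : Set G) := by
  ext y
  simp only [Set.mem_setOf_eq, Set.mem_diff, SetLike.mem_coe]
  constructor
  · rintro ⟨hy, hC⟩
    exact ⟨(cc_congr hC.symm) ▸ mem_cc_self y, hy⟩
  · rintro ⟨hyc, hy⟩
    exact ⟨hy, (hF x y hx hy (cc_le_centralizer hyc)).symm⟩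

lemma card_cc [Finite G] {x : G} {n : ℕ}
    (h : (Subgroup.center G).relIndex (centerCentralizer x) = n) :
    Nat.card (centerCentralizer x) = n * Nat.card (Subgroup.center G) := by
  have h1 : ((Subgroup.center G).subgroupOf (centerCentralizer x)).index *
      Nat.card ((Subgroup.center G).subgroupOf (centerCentralizer x))
        = Nat.card (centerCentralizer x) := Subgroup.index_mul_card _
  rw [show ((Subgroup.center G).subgroupOf (centerCentralizer x)).index
      = (Subgroup.center G).relIndex (centerCentralizer x) from rfl, h] at h1
  rw [← h1]
  congr 1
  exact Nat.card_congr (Subgroup.subgroupOfEquivOfLe (center_le_cc x)).toEquiv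

end aux

theorem stmt5 (G : Type*) [Group G] [Finite G] (hF : IsFGroup G)
    (p k m : ℕ) (hp : p.Prime) (hk : (Subgroup.center G).index = p ^ k)
    (hm : ∀ x : G, x ∉ Subgroup.center G →
      (Subgroup.center G).relIndex (centerCentralizer x) = p ^ m) :
    numCent G = (p ^ k - 1) / (p ^ m - 1) + 1 := by
  classical
  have := Fintype.ofFinite G
  by_cases hab : ∀ x : G, x ∈ Subgroup.center G
  · -- abelian case
    have hc : cent G = {(⊤ : Subgroup G)} := by
      apply Set.eq_singleton_iff_nonempty_unique_mem.2
      exact ⟨⟨Subgroup.centralizer {1}, Set.mem_range_self 1⟩,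
        by rintro K ⟨x, rfl⟩; exact centralizer_eq_top_iff.2 (hab x)⟩
    have hcenter : Subgroup.center G = ⊤ := top_le_iff.1 fun x _ => hab x
    have hk0 : k = 0 := by
      rw [hcenter, Subgroup.index_top] at hk
      by_contra h
      exact absurd hk.symm (Nat.one_lt_pow h hp.one_lt).ne'
    subst hk0
    simp [numCent, hc]
  · -- nonabelian case
    push_neg at hab
    obtain ⟨x₀, hx₀⟩ := hab
    set cZ := Nat.card (Subgroup.center G) with hcZ
    have hZ : 0 < cZ := Nat.card_pos
    have hpm1 : 1 < p ^ m := by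
      rcases Nat.lt_or_ge 1 (p ^ m) with h | h
      · exact h
      have h1 : p ^ m = 1 := le_antisymm h (Nat.one_le_pow _ _ hp.pos)
      have h2 : centerCentralizer x₀ ≤ Subgroup.center G :=
        Subgroup.relIndex_eq_one.1 ((hm x₀ hx₀).trans h1)
      exact absurd (h2 (mem_cc_self x₀)) hx₀
    set f : G → Subgroup G := fun x => Subgroup.centralizer {x} with hf
    set S : Finset G := Finset.univ.filter (· ∉ Subgroup.center G) with hS
    set Im : Finset (Subgroup G) := S.image f with hIm
    -- each fiber has cardinality cZ * (p^m - 1)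
    have hfiber : ∀ K ∈ Im, (S.filter (fun y => f y = K)).card = cZ * (p ^ m - 1) := by
      intro K hK
      obtain ⟨x, hxS, rfl⟩ := Finset.mem_image.1 hK
      have hx : x ∉ Subgroup.center G := (Finset.mem_filter.1 hxS).2
      have hcoe : (↑(S.filter (fun y => f y = f x)) : Set G)
          = (centerCentralizer x : Set G) \ (Subgroup.center G : Set G) := by
        rw [← fiber_eq hF hx]
        ext y
        simp [hS, hf]
      have h1 : (S.filter (fun y => f y = f x)).card
          = Nat.card (centerCentralizer x) - cZ := by
        rw [← Set.ncard_coe_finset, hcoe,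
          Set.ncard_diff (SetLike.coe_subset_coe.2 (center_le_cc x))]
        simp [← Nat.card_coe_set_eq, hcZ]
      rw [h1, card_cc (hm x hx), Nat.mul_sub, Nat.mul_one, Nat.mul_comm cZ (p ^ m)]
    -- total count of noncentral elements
    have hScard : S.card = cZ * (p ^ k - 1) := by
      have hcoe : (↑S : Set G) = Set.univ \ (Subgroup.center G : Set G) := by
        ext y; simp [hS]
      have h1 : S.card = Nat.card G - cZ := by
        rw [← Set.ncard_coe_finset, hcoe,
          Set.ncard_diff (Set.subset_univ _), Set.ncard_univ]
        simp [← Nat.card_coe_set_eq, hcZ]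
      have h2 : Nat.card G = cZ * p ^ k := by
        rw [← Subgroup.card_mul_index (Subgroup.center G), hk]
      rw [h1, h2, Nat.mul_sub, Nat.mul_one]
    -- sum over fibers
    have hsum : S.card = Im.card * (cZ * (p ^ m - 1)) := by
      rw [Finset.card_eq_sum_card_fiberwise (fun x hx => Finset.mem_image_of_mem f hx),
        Finset.sum_congr rfl hfiber, Finset.sum_const, smul_eq_mul]
    have hmain : Im.card * (p ^ m - 1) = p ^ k - 1 := by
      have h3 : cZ * (Im.card * (p ^ m - 1)) = cZ * (p ^ k - 1) := by
        rw [Nat.mul_left_comm]; exact hsum.symm.trans hScard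
      exact Nat.eq_of_mul_eq_mul_left hZ h3
    -- numCent
    have hcent : cent G = (↑Im : Set (Subgroup G)) ∪ {⊤} := by
      ext K
      constructor
      · rintro ⟨x, rfl⟩
        by_cases hx : x ∈ Subgroup.center G
        · exact Or.inr (centralizer_eq_top_iff.2 hx)
        · exact Or.inl (Finset.mem_coe.2 (Finset.mem_image_of_mem f
            (Finset.mem_filter.2 ⟨Finset.mem_univ x, hx⟩)))
      · rintro (hK | hK)
        · obtain ⟨x, _, rfl⟩ := Finset.mem_image.1 (Finset.mem_coe.1 hK)
          exact ⟨x, rfl⟩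
        · rw [Set.mem_singleton_iff] at hK
          exact ⟨1, by rw [hK]; exact centralizer_eq_top_iff.2 (Subgroup.one_mem _)⟩
    have htop : (⊤ : Subgroup G) ∉ (↑Im : Set (Subgroup G)) := by
      rw [Finset.mem_coe, hIm, Finset.mem_image]
      rintro ⟨x, hxS, hx⟩
      exact (Finset.mem_filter.1 hxS).2 (centralizer_eq_top_iff.1 hx)
    have hnc : numCent G = Im.card + 1 := by
      rw [numCent, hcent, Set.ncard_union_eq (Set.disjoint_singleton_right.2 htop),
        Set.ncard_coe_finset, Set.ncard_singleton]
    rw [hnc, ← hmain, Nat.mul_div_cancel _ (by omega)]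
end

section
/- Let G be a finite group in which every proper centralizer has index p (a prime), i.e., [G : C(x)] = p for all non-central x ∈ G. Then G/Z(G) is an elementary abelian p-group. -/
namespace Stmt8Helpers

open Subgroup

universe u

variable {G : Type u} [Group G]

/-- Commutator `[w, g] = w⁻¹ * g⁻¹ * w * g`. -/
def cmt (w g : G) : G := w⁻¹ * g⁻¹ * w * g

lemma cmt_mul (w : G) (hc : ∀ g : G, cmt w g ∈ Subgroup.center G) (g h : G) :
    cmt w (g * h) = cmt w g * cmt w h := by
  have h1 : ∀ x : G, x * cmt w g = cmt w g * x := fun x =>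
    Subgroup.mem_center_iff.mp (hc g) x
  unfold cmt at h1 ⊢
  calc w⁻¹ * (g * h)⁻¹ * w * (g * h)
      = w⁻¹ * h⁻¹ * (w * (w⁻¹ * g⁻¹ * w * g)) * h := by group
    _ = w⁻¹ * h⁻¹ * w * ((w⁻¹ * g⁻¹ * w * g) * h) := by group
    _ = w⁻¹ * h⁻¹ * w * (h * (w⁻¹ * g⁻¹ * w * g)) := by rw [← h1 h]
    _ = (w⁻¹ * h⁻¹ * w * h) * (w⁻¹ * g⁻¹ * w * g) := by group
    _ = (w⁻¹ * g⁻¹ * w * g) * (w⁻¹ * h⁻¹ * w * h) := h1 _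

lemma cmt_one_right (w : G) : cmt w 1 = 1 := by unfold cmt; group

lemma cmt_pow_left (w g : G) (hc : ∀ g : G, cmt w g ∈ Subgroup.center G) (k : ℕ) :
    cmt (w ^ k) g = (cmt w g) ^ k := by
  induction k with
  | zero => unfold cmt; simp
  | succ k ih =>
    have hcent : ∀ x : G, x * (cmt w g) ^ k = (cmt w g) ^ k * x := fun x =>
      Subgroup.mem_center_iff.mp (pow_mem (hc g) k) x
    calc cmt (w ^ (k + 1)) g
        = w⁻¹ * (cmt (w ^ k) g) * (g⁻¹ * w * g) := by unfold cmt; rw [pow_succ]; group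
      _ = w⁻¹ * (cmt w g) ^ k * (g⁻¹ * w * g) := by rw [ih]
      _ = (cmt w g) ^ k * w⁻¹ * (g⁻¹ * w * g) := by rw [hcent w⁻¹]
      _ = (cmt w g) ^ k * cmt w g := by unfold cmt; group
      _ = (cmt w g) ^ (k + 1) := (pow_succ _ _).symm

lemma cmt_pow_right (w g : G) (hc : ∀ g : G, cmt w g ∈ Subgroup.center G) (k : ℕ) :
    cmt w (g ^ k) = (cmt w g) ^ k := by
  induction k with
  | zero => simpa using cmt_one_right w
  | succ k ih => rw [pow_succ, cmt_mul w hc, ih, pow_succ]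

lemma cmt_eq_one_iff {w g : G} : cmt w g = 1 ↔ w * g = g * w := by
  constructor
  · intro hg
    calc w * g = (g * w) * (w⁻¹ * g⁻¹ * w * g) := by group
      _ = g * w := by rw [show (w⁻¹ * g⁻¹ * w * g) = 1 from hg, mul_one]
  · intro hg
    calc cmt w g = w⁻¹ * g⁻¹ * (w * g) := by unfold cmt; group
      _ = w⁻¹ * g⁻¹ * (g * w) := by rw [hg]
      _ = 1 := by group

/-- If `H ≤ K` have the same finite index then they are equal. -/
lemma subgroup_eq_of_le_of_index_eq {H K : Subgroup G} (hle : H ≤ K)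
    (hidx : H.index = K.index) (hne : K.index ≠ 0) : H = K := by
  have hmul := Subgroup.relIndex_mul_index hle
  rw [hidx] at hmul
  have h1 : H.relIndex K = 1 := by
    have := Nat.eq_of_mul_eq_mul_right (Nat.pos_of_ne_zero hne)
      (hmul.trans (one_mul K.index).symm)
    exact this
  exact le_antisymm hle (Subgroup.relIndex_eq_one.mp h1)

theorem main : ∀ (n : ℕ) (G : Type u) [Group G] [Finite G] (p : ℕ), p.Prime →
    Nat.card G ≤ n →
    (∀ x : G, x ∉ Subgroup.center G → (Subgroup.centralizer {x}).index = p) →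
    (∀ a b : G, a⁻¹ * b⁻¹ * a * b ∈ Subgroup.center G) ∧
      (∀ a : G, a ^ p ∈ Subgroup.center G) := by
  intro n
  induction n using Nat.strong_induction_on with
  | _ n ih =>
  intro G _ _ p hp hcard h
  by_cases hZ : ∀ x : G, x ∈ Subgroup.center G
  · exact ⟨fun a b => hZ _, fun a => hZ _⟩
  push_neg at hZ
  obtain ⟨x₀, hx₀⟩ := hZ
  haveI : Fact p.Prime := ⟨hp⟩
  -- p divides the order of G
  have hpdvd : p ∣ Nat.card G := by
    have h1 := Subgroup.index_dvd_card (H := Subgroup.centralizer {x₀})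
    rwa [h x₀ hx₀] at h1
  obtain ⟨P⟩ : Nonempty (Sylow p G) := inferInstance
  have hGpos : Nat.card G ≠ 0 := Nat.card_pos.ne'
  haveI : Nontrivial P := by
    rw [← Finite.one_lt_card_iff_nontrivial, P.card_eq_multiplicity]
    exact Nat.one_lt_pow (hp.factorization_pos_of_dvd hGpos hpdvd).ne' hp.one_lt
  -- a nontrivial central element of P is central in G
  haveI : Nontrivial (Subgroup.center ((P : Subgroup G) : Type u)) :=
    IsPGroup.center_nontrivial P.isPGroup'
  obtain ⟨u, hu⟩ := exists_ne (1 : Subgroup.center ((P : Subgroup G) : Type u))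
  set w : G := ((u : (P : Subgroup G)) : G) with hwdef
  have hw1 : w ≠ 1 := by
    intro hw
    exact hu (Subtype.ext (Subtype.ext hw))
  have hwZ : w ∈ Subgroup.center G := by
    by_contra hwnc
    have hCw := h w hwnc
    have hPle : (P : Subgroup G) ≤ Subgroup.centralizer {w} := by
      intro y hy
      rw [Subgroup.mem_centralizer_singleton_iff]
      have h2 := Subgroup.mem_center_iff.mp u.2 ⟨y, hy⟩
      exact congrArg Subtype.val h2
    have hdvd : (Subgroup.centralizer {w}).index ∣ (P : Subgroup G).index :=
      Subgroup.index_dvd_of_le hPle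
    rw [hCw] at hdvd
    exact P.not_dvd_index hdvd
  -- the center is nontrivial
  haveI : Nontrivial (Subgroup.center G) :=
    ⟨⟨⟨w, hwZ⟩, 1, fun hc => hw1 (congrArg Subtype.val hc)⟩⟩
  set Q := G ⧸ Subgroup.center G with hQdef
  haveI : Finite Q := Finite.of_surjective _ (QuotientGroup.mk_surjective)
  have hQcard : Nat.card Q < Nat.card G := by
    have heq := Subgroup.card_eq_card_quotient_mul_card_subgroup (Subgroup.center G)
    rw [heq]
    exact lt_mul_of_one_lt_right Nat.card_pos Finite.one_lt_card
  -- the hypothesis passes to the quotient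
  have hQ : ∀ x : Q, x ∉ Subgroup.center Q → (Subgroup.centralizer {x}).index = p := by
    intro xq hxq
    obtain ⟨x, rfl⟩ := QuotientGroup.mk_surjective xq
    have hx : x ∉ Subgroup.center G := by
      intro hx
      apply hxq
      rw [Subgroup.mem_center_iff]
      intro gq
      obtain ⟨g, rfl⟩ := QuotientGroup.mk_surjective gq
      rw [← QuotientGroup.mk_mul, ← QuotientGroup.mk_mul,
        Subgroup.mem_center_iff.mp hx g]
    have hdvd : (Subgroup.centralizer {(QuotientGroup.mk x : Q)}).index ∣ p := by
      have hle : Subgroup.map (QuotientGroup.mk' (Subgroup.center G))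
          (Subgroup.centralizer {x}) ≤ Subgroup.centralizer {(QuotientGroup.mk x : Q)} := by
        rintro _ ⟨c, hc, rfl⟩
        rw [Subgroup.mem_centralizer_singleton_iff]
        have hxc := Subgroup.mem_centralizer_singleton_iff.mp hc
        show (QuotientGroup.mk c : Q) * QuotientGroup.mk x = QuotientGroup.mk x * QuotientGroup.mk c
        rw [← QuotientGroup.mk_mul, ← QuotientGroup.mk_mul, hxc]
      have hd := Subgroup.index_dvd_of_le hle
      rwa [Subgroup.index_map_eq _ (QuotientGroup.mk'_surjective _)
        (by rw [QuotientGroup.ker_mk']; exact Subgroup.center_le_centralizer _),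
        h x hx] at hd
    rcases (Nat.dvd_prime hp).mp hdvd with h1 | h1
    · exfalso
      apply hxq
      have htop : Subgroup.centralizer {(QuotientGroup.mk x : Q)} = ⊤ :=
        Subgroup.index_eq_one.mp h1
      rw [Subgroup.mem_center_iff]
      intro g
      have hg : g ∈ Subgroup.centralizer {(QuotientGroup.mk x : Q)} := htop ▸ Subgroup.mem_top g
      exact Subgroup.mem_centralizer_singleton_iff.mp hg
    · exact h1
  obtain ⟨AQ, BQ⟩ := ih (Nat.card Q) (lt_of_lt_of_le hQcard hcard) Q p hp le_rfl hQ
  -- every element of order coprime to p is central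
  have hcop : ∀ w : G, Nat.Coprime (orderOf w) p → w ∈ Subgroup.center G := by
    intro w hwcop
    have hmkw : (QuotientGroup.mk w : Q) ∈ Subgroup.center Q := by
      set v : Q := QuotientGroup.mk w with hvdef
      set m := orderOf w with hmdef
      have h1 : v ^ p ∈ Subgroup.center Q := BQ v
      have h2 : v ^ m = 1 := by
        rw [hvdef, ← QuotientGroup.mk_pow, pow_orderOf_eq_one]
        rfl
      have hbez : (1 : ℤ) = (m : ℤ) * Nat.gcdA m p + (p : ℤ) * Nat.gcdB m p := by
        have hb := Nat.gcd_eq_gcd_ab m p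
        rwa [Nat.Coprime.gcd_eq_one hwcop, Nat.cast_one] at hb
      have hv : v = (v ^ p) ^ (Nat.gcdB m p) := by
        calc v = v ^ (1 : ℤ) := (zpow_one v).symm
          _ = v ^ ((m : ℤ) * Nat.gcdA m p + (p : ℤ) * Nat.gcdB m p) := by rw [← hbez]
          _ = v ^ ((m : ℤ) * Nat.gcdA m p) * v ^ ((p : ℤ) * Nat.gcdB m p) := zpow_add v _ _
          _ = (v ^ (m : ℤ)) ^ (Nat.gcdA m p) * (v ^ (p : ℤ)) ^ (Nat.gcdB m p) := by
              rw [zpow_mul, zpow_mul]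
          _ = (v ^ m) ^ (Nat.gcdA m p) * (v ^ p) ^ (Nat.gcdB m p) := by
              rw [zpow_natCast, zpow_natCast]
          _ = (v ^ p) ^ (Nat.gcdB m p) := by rw [h2, one_zpow, one_mul]
      rw [hv]
      exact Subgroup.zpow_mem _ h1 _
    have hcG : ∀ g : G, cmt w g ∈ Subgroup.center G := by
      intro g
      have hone : (QuotientGroup.mk (cmt w g) : Q) = 1 := by
        unfold cmt
        rw [QuotientGroup.mk_mul, QuotientGroup.mk_mul, QuotientGroup.mk_mul,
          QuotientGroup.mk_inv, QuotientGroup.mk_inv]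
        have hcomm := Subgroup.mem_center_iff.mp hmkw (QuotientGroup.mk g)
        rw [mul_assoc, ← hcomm]
        group
      exact (QuotientGroup.eq_one_iff _).mp hone
    by_contra hwnc
    have hidx := h w hwnc
    have hp1 : ∀ g : G, (cmt w g) ^ p = 1 := by
      set φ : G →* G := MonoidHom.mk' (fun g => cmt w g) (cmt_mul w hcG) with hφdef
      have hker : φ.ker = Subgroup.centralizer {w} := by
        ext g
        rw [MonoidHom.mem_ker, Subgroup.mem_centralizer_singleton_iff]
        exact cmt_eq_one_iff.trans eq_comm
      have hrange : Nat.card φ.range = p := by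
        rw [← Subgroup.index_ker, hker, hidx]
      intro g
      have hpow : (⟨φ g, ⟨g, rfl⟩⟩ : φ.range) ^ p = 1 := by
        rw [← hrange]; exact pow_card_eq_one'
      have := congrArg Subtype.val hpow
      exact this
    have hzero : ∀ g : G, cmt w g = 1 := by
      intro g
      have hn : (cmt w g) ^ (orderOf w) = 1 := by
        rw [← cmt_pow_left w g hcG]
        unfold cmt
        rw [pow_orderOf_eq_one]
        group
      have hord : orderOf (cmt w g) ∣ Nat.gcd (orderOf w) p :=
        Nat.dvd_gcd (orderOf_dvd_iff_pow_eq_one.mpr hn)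
          (orderOf_dvd_iff_pow_eq_one.mpr (hp1 g))
      rw [Nat.Coprime.gcd_eq_one hwcop] at hord
      exact orderOf_eq_one_iff.mp (Nat.dvd_one.mp hord)
    apply hwnc
    rw [Subgroup.mem_center_iff]
    intro g
    exact (cmt_eq_one_iff.mp (hzero g)).symm
  -- the central quotient is a p-group
  have hPQ : IsPGroup p Q := by
    intro xq
    obtain ⟨x, rfl⟩ := QuotientGroup.mk_surjective xq
    set m := orderOf x with hmdef
    have hm : m ≠ 0 := (orderOf_pos x).ne'
    refine ⟨m.factorization p, ?_⟩
    have hw : x ^ (p ^ m.factorization p) ∈ Subgroup.center G := by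
      apply hcop
      have hdvd : p ^ m.factorization p ∣ m := Nat.ordProj_dvd m p
      rw [orderOf_pow, ← hmdef, Nat.gcd_eq_right hdvd]
      exact (Nat.coprime_ordCompl hp hm).symm
    rw [← QuotientGroup.mk_pow]
    exact (QuotientGroup.eq_one_iff _).mpr hw
  haveI : Group.IsNilpotent Q := hPQ.isNilpotent
  -- centralizers of noncentral elements are normal
  have hnormal : ∀ a : G, a ∉ Subgroup.center G → (Subgroup.centralizer {a} : Subgroup G).Normal := by
    intro a ha
    set f := QuotientGroup.mk' (Subgroup.center G) with hfdef
    have hkerle : f.ker ≤ Subgroup.centralizer {a} := by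
      rw [QuotientGroup.ker_mk']; exact Subgroup.center_le_centralizer _
    set Hb := (Subgroup.centralizer {a}).map f with hHbdef
    have hHbidx : Hb.index = p := by
      rw [hHbdef, Subgroup.index_map_eq _ (QuotientGroup.mk'_surjective _) hkerle, h a ha]
    have hHbnormal : Hb.Normal := by
      rcases eq_or_ne (Subgroup.normalizer (Hb : Set Q)) ⊤ with hN | hN
      · exact Subgroup.normalizer_eq_top_iff.mp hN
      exfalso
      have hnetop : Hb ≠ ⊤ := by
        intro htop
        rw [htop, Subgroup.index_top] at hHbidx
        exact hp.one_lt.ne' hHbidx.symm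
      have hlt : Hb < Subgroup.normalizer (Hb : Set Q) :=
        normalizerCondition_of_isNilpotent Hb (lt_top_iff_ne_top.mpr hnetop)
      have hmul := Subgroup.relIndex_mul_index (Subgroup.le_normalizer (H := Hb))
      rw [hHbidx] at hmul
      have hdvd : (Subgroup.normalizer (Hb : Set Q)).index ∣ p := Dvd.intro_left _ hmul
      rcases (Nat.dvd_prime hp).mp hdvd with h1 | h1
      · exact hN (Subgroup.index_eq_one.mp h1)
      · rw [h1] at hmul
        have hone : Hb.relIndex (Subgroup.normalizer (Hb : Set Q)) = 1 :=
          Nat.eq_of_mul_eq_mul_right hp.pos (hmul.trans (one_mul p).symm)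
        exact absurd (Subgroup.relIndex_eq_one.mp hone) (not_le_of_gt hlt)
    have hcomap : Subgroup.centralizer {a} = Hb.comap f := by
      rw [hHbdef, Subgroup.comap_map_eq, QuotientGroup.ker_mk',
        sup_of_le_left (Subgroup.center_le_centralizer _)]
    rw [hcomap]
    exact Subgroup.Normal.comap hHbnormal f
  -- all commutators are central
  have hA : ∀ a b : G, a⁻¹ * b⁻¹ * a * b ∈ Subgroup.center G := by
    intro a b
    by_cases ha : a ∈ Subgroup.center G
    · have hone : a⁻¹ * b⁻¹ * a * b = 1 := by
        have hcomm := Subgroup.mem_center_iff.mp ha b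
        calc a⁻¹ * b⁻¹ * a * b = a⁻¹ * b⁻¹ * (a * b) := by group
          _ = a⁻¹ * b⁻¹ * (b * a) := by rw [← hcomm]
          _ = 1 := by group
      rw [hone]; exact Subgroup.one_mem _
    by_cases hb : b ∈ Subgroup.center G
    · have hone : a⁻¹ * b⁻¹ * a * b = 1 := by
        have hcomm := Subgroup.mem_center_iff.mp hb a
        calc a⁻¹ * b⁻¹ * a * b = a⁻¹ * b⁻¹ * (a * b) := by group
          _ = a⁻¹ * b⁻¹ * (b * a) := by rw [hcomm]
          _ = 1 := by group
      rw [hone]; exact Subgroup.one_mem _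
    by_contra ht
    have ht1 : a⁻¹ * b⁻¹ * a * b ≠ 1 := fun h1 => ht (h1 ▸ Subgroup.one_mem _)
    have hNa := hnormal a ha
    have hNb := hnormal b hb
    have hCat : Subgroup.centralizer {a} ≤ Subgroup.centralizer {a⁻¹ * b⁻¹ * a * b} := by
      intro c hc
      rw [Subgroup.mem_centralizer_singleton_iff]
      have hca : Commute c a := Subgroup.mem_centralizer_singleton_iff.mp hc
      have h2 : b * c * b⁻¹ ∈ Subgroup.centralizer {a} := hNa.conj_mem c hc b
      have h2' := Subgroup.mem_centralizer_singleton_iff.mp h2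
      have hcb : Commute c (b⁻¹ * a * b) := by
        show c * (b⁻¹ * a * b) = (b⁻¹ * a * b) * c
        calc c * (b⁻¹ * a * b) = b⁻¹ * ((b * c * b⁻¹) * a) * b := by group
          _ = b⁻¹ * (a * (b * c * b⁻¹)) * b := by rw [h2']
          _ = (b⁻¹ * a * b) * c := by group
      have hct : Commute c (a⁻¹ * (b⁻¹ * a * b)) := (hca.inv_right).mul_right hcb
      have hre : a⁻¹ * b⁻¹ * a * b = a⁻¹ * (b⁻¹ * a * b) := by group
      rw [hre]
      exact hct
    have hCbt : Subgroup.centralizer {b} ≤ Subgroup.centralizer {a⁻¹ * b⁻¹ * a * b} := by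
      intro c hc
      rw [Subgroup.mem_centralizer_singleton_iff]
      have hcb : Commute c b := Subgroup.mem_centralizer_singleton_iff.mp hc
      have h2 : a * c * a⁻¹ ∈ Subgroup.centralizer {b} := hNb.conj_mem c hc a
      have h2' : Commute (a * c * a⁻¹) b := Subgroup.mem_centralizer_singleton_iff.mp h2
      have hX : (a * c * a⁻¹) * b⁻¹ = b⁻¹ * (a * c * a⁻¹) := h2'.inv_right.eq
      have hcab : Commute c (a⁻¹ * b⁻¹ * a) := by
        show c * (a⁻¹ * b⁻¹ * a) = (a⁻¹ * b⁻¹ * a) * c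
        calc c * (a⁻¹ * b⁻¹ * a) = a⁻¹ * ((a * c * a⁻¹) * b⁻¹) * a := by group
          _ = a⁻¹ * (b⁻¹ * (a * c * a⁻¹)) * a := by rw [hX]
          _ = (a⁻¹ * b⁻¹ * a) * c := by group
      have h3 : Commute c ((a⁻¹ * b⁻¹ * a) * b) := hcab.mul_right hcb
      have hre : a⁻¹ * b⁻¹ * a * b = (a⁻¹ * b⁻¹ * a) * b := by group
      rw [hre]
      exact h3
    have hti := h _ ht
    have hCaeq : Subgroup.centralizer {a} = Subgroup.centralizer {a⁻¹ * b⁻¹ * a * b} :=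
      subgroup_eq_of_le_of_index_eq hCat (by rw [h a ha, hti]) (by rw [hti]; exact hp.ne_zero)
    have hCbeq : Subgroup.centralizer {b} = Subgroup.centralizer {a⁻¹ * b⁻¹ * a * b} :=
      subgroup_eq_of_le_of_index_eq hCbt (by rw [h b hb, hti]) (by rw [hti]; exact hp.ne_zero)
    have hab : a ∈ Subgroup.centralizer {b} := by
      rw [hCbeq, ← hCaeq]
      exact Subgroup.mem_centralizer_singleton_iff.mpr rfl
    have hcomm : a * b = b * a := Subgroup.mem_centralizer_singleton_iff.mp hab
    apply ht1
    calc a⁻¹ * b⁻¹ * a * b = a⁻¹ * b⁻¹ * (a * b) := by group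
      _ = a⁻¹ * b⁻¹ * (b * a) := by rw [hcomm]
      _ = 1 := by group
  -- p-th powers are central
  have hB : ∀ a : G, a ^ p ∈ Subgroup.center G := by
    intro a
    by_cases ha : a ∈ Subgroup.center G
    · exact pow_mem ha p
    haveI hNa := hnormal a ha
    rw [Subgroup.mem_center_iff]
    intro g
    have hc : ∀ g : G, cmt a g ∈ Subgroup.center G := fun g => hA a g
    have key : cmt (a ^ p) g = 1 := by
      rw [cmt_pow_left a g hc, ← cmt_pow_right a g hc]
      have hgp : g ^ p ∈ Subgroup.centralizer {a} := by
        have hmem := Subgroup.pow_index_mem (Subgroup.centralizer {a}) g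
        rwa [h a ha] at hmem
      exact cmt_eq_one_iff.mpr (Subgroup.mem_centralizer_singleton_iff.mp hgp).symm
    exact (cmt_eq_one_iff.mp key).symm
  exact ⟨hA, hB⟩

end Stmt8Helpers
theorem stmt8 (G : Type*) [Group G] [Finite G] (p : ℕ) (hp : p.Prime)
    (h : ∀ x : G, x ∉ Subgroup.center G → (Subgroup.centralizer {x}).index = p) :
    (∀ a b : G ⧸ Subgroup.center G, a * b = b * a) ∧
      (∀ a : G ⧸ Subgroup.center G, a ^ p = 1) := by
  obtain ⟨hA, hB⟩ := Stmt8Helpers.main (Nat.card G) G p hp le_rfl h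
  constructor
  · intro aq bq
    obtain ⟨a, rfl⟩ := QuotientGroup.mk_surjective aq
    obtain ⟨b, rfl⟩ := QuotientGroup.mk_surjective bq
    rw [← QuotientGroup.mk_mul, ← QuotientGroup.mk_mul]
    apply QuotientGroup.eq.mpr
    have heq : (a * b)⁻¹ * (b * a) = b⁻¹ * a⁻¹ * b * a := by group
    rw [heq]
    exact hA b a
  · intro aq
    obtain ⟨a, rfl⟩ := QuotientGroup.mk_surjective aq
    rw [← QuotientGroup.mk_pow]
    exact (QuotientGroup.eq_one_iff _).mpr (hB a)
end

section
/- Let G be a finite group in which the centralizer of every non-central element is a maximal subgroup of G, and suppose G is nilpotent. Then [G : C(x)] = p for all non-central x ∈ G for a single prime p, [G : Z(G)] = p^k for some k, and |Cent(G)| = (p^k − 1)/(p − 1) + 1 = number of z-classes of G. -/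
namespace Stmt14Aux
open Subgroup
open scoped commutatorElement
variable {G : Type*} [Group G]




theorem mem_cen {x g : G} : g ∈ centralizer ({x} : Set G) ↔ x * g = g * x := by
  rw [Subgroup.mem_centralizer_iff]; simp

theorem cen_eq_top {x : G} : centralizer ({x} : Set G) = ⊤ ↔ x ∈ center G := by
  simp only [Subgroup.eq_top_iff', mem_cen, Subgroup.mem_center_iff]
  exact forall_congr' fun g => eq_comm

theorem coatom_normal [Finite G] [Group.IsNilpotent G] {H : Subgroup G} (h : IsCoatom H) :
    H.Normal :=
  NormalizerCondition.normal_of_coatom H normalizerCondition_of_isNilpotent h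

theorem coatom_prime_index [Finite G] {H : Subgroup G} (hN : H.Normal) (h : IsCoatom H) :
    H.index.Prime := by
  classical
  haveI := hN
  have hne : H.index ≠ 1 := fun h1 => h.1 (Subgroup.index_eq_one.mp h1)
  set q := H.index.minFac with hqdef
  have hqp : q.Prime := Nat.minFac_prime hne
  haveI : Fact q.Prime := ⟨hqp⟩
  haveI : Fintype (G ⧸ H) := Fintype.ofFinite _
  have hdvd : q ∣ Fintype.card (G ⧸ H) := by
    rw [← Nat.card_eq_fintype_card]
    exact H.index.minFac_dvd
  obtain ⟨g, hg⟩ := exists_prime_orderOf_dvd_card q hdvd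
  have hsurj := QuotientGroup.mk'_surjective H
  set K' : Subgroup G := (Subgroup.zpowers g).comap (QuotientGroup.mk' H) with hK'
  have hHK : H ≤ K' := fun h hh => by
    simp only [hK', Subgroup.mem_comap]
    have : QuotientGroup.mk' H h = 1 := (QuotientGroup.eq_one_iff h).mpr hh
    rw [this]; exact Subgroup.one_mem _
  obtain ⟨g₀, hg₀⟩ := hsurj g
  have hg₀K : g₀ ∈ K' := by
    simp only [hK', Subgroup.mem_comap, hg₀]
    exact Subgroup.mem_zpowers g
  have hKne : K' ≠ H := by
    intro hKH
    rw [hKH] at hg₀K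
    have : g = 1 := hg₀ ▸ (QuotientGroup.eq_one_iff g₀).mpr hg₀K
    rw [this, orderOf_one] at hg
    exact hqp.one_lt.ne' hg.symm
  have hKtop : K' = ⊤ := h.2 K' (lt_of_le_of_ne hHK (Ne.symm hKne))
  have hz : Subgroup.zpowers g = ⊤ := by
    have := Subgroup.map_comap_eq_self_of_surjective hsurj (Subgroup.zpowers g)
    rw [← hK'] at this
    rw [← this, hKtop, ← MonoidHom.range_eq_map, MonoidHom.range_eq_top.mpr hsurj]
  have : orderOf g = Nat.card (G ⧸ H) :=
    orderOf_eq_card_of_forall_mem_zpowers fun x => hz ▸ Subgroup.mem_top x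
  have hcard : Nat.card (G ⧸ H) = q := by rw [← this, hg]
  have : H.index = q := hcard
  rw [this]; exact hqp

theorem comm_mem_center [Finite G]
    (hmax : ∀ x : G, x ∉ Subgroup.center G → IsCoatom (Subgroup.centralizer ({x} : Set G)))
    [Group.IsNilpotent G] (g h : G) : ⁅g, h⁆ ∈ center G := by
  rw [Subgroup.mem_center_iff]
  intro y
  by_cases hy : y ∈ center G
  · exact (Subgroup.mem_center_iff.mp hy ⁅g, h⁆).symm
  · have hco := hmax y hy
    haveI hN : (centralizer ({y} : Set G)).Normal := coatom_normal hco
    have hqp : (centralizer ({y} : Set G)).index.Prime := coatom_prime_index hN hco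
    haveI : Fact (centralizer ({y} : Set G)).index.Prime := ⟨hqp⟩
    haveI : IsCyclic (G ⧸ centralizer ({y} : Set G)) := isCyclic_of_prime_card (p := (centralizer ({y} : Set G)).index) rfl
    have hcomm : ∀ a b : G ⧸ centralizer ({y} : Set G), a * b = b * a := fun a b =>
      (IsCyclic.commGroup (α := G ⧸ centralizer ({y} : Set G))).mul_comm a b
    have : ⁅g, h⁆ ∈ centralizer ({y} : Set G) := by
      rw [← QuotientGroup.ker_mk' (centralizer ({y} : Set G)), MonoidHom.mem_ker,
        map_commutatorElement]
      exact commutatorElement_eq_one_iff_commute.mpr (hcomm _ _)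
    exact mem_cen.mp this


theorem comm_mul_right (hZ : ∀ a b : G, ⁅a, b⁆ ∈ center G) (g a b : G) :
    ⁅g, a * b⁆ = ⁅g, a⁆ * ⁅g, b⁆ := by
  have hc : ∀ x : G, x * ⁅g, b⁆ = ⁅g, b⁆ * x := fun x => Subgroup.mem_center_iff.mp (hZ g b) x
  have key : ⁅g, a * b⁆ = ⁅g, a⁆ * (a * ⁅g, b⁆ * a⁻¹) := by
    simp only [commutatorElement_def]; group
  rw [key, hc a, mul_assoc, mul_inv_cancel, mul_one]

/-- For `g : G`, the map `w ↦ ⁅g, w⁆` is a homomorphism when commutators are central. -/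
def commHom (hZ : ∀ a b : G, ⁅a, b⁆ ∈ center G) (g : G) : G →* G :=
  MonoidHom.mk' (fun w => ⁅g, w⁆) fun a b => comm_mul_right hZ g a b

theorem commHom_apply (hZ : ∀ a b : G, ⁅a, b⁆ ∈ center G) (g w : G) :
    commHom hZ g w = ⁅g, w⁆ := rfl

theorem commHom_ker (hZ : ∀ a b : G, ⁅a, b⁆ ∈ center G) (g : G) :
    (commHom hZ g).ker = centralizer ({g} : Set G) := by
  ext w
  rw [MonoidHom.mem_ker, commHom_apply, commutatorElement_eq_one_iff_commute, mem_cen]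
  exact Iff.rfl

theorem comm_mul_left (hZ : ∀ a b : G, ⁅a, b⁆ ∈ center G) (a b c : G) :
    ⁅a * b, c⁆ = ⁅a, c⁆ * ⁅b, c⁆ := by
  have h1 : ⁅a * b, c⁆ = ⁅c, a * b⁆⁻¹ := (commutatorElement_inv c (a * b)).symm
  rw [h1, comm_mul_right hZ c a b, mul_inv_rev, commutatorElement_inv, commutatorElement_inv]
  exact (Subgroup.mem_center_iff.mp (hZ b c) ⁅a, c⁆).symm

/-- Bezout trick: if `x ^ p ∈ K` and `x ^ m ∈ K` with `p` prime not dividing `m`,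
then `x ∈ K`. -/
theorem bezout_mem {p : ℕ} (hp : p.Prime) (K : Subgroup G) {x : G} (hxp : x ^ p ∈ K)
    {m : ℤ} (hm : ¬((p : ℤ) ∣ m)) (hxm : x ^ m ∈ K) : x ∈ K := by
  have hnd : ¬ p ∣ m.natAbs := fun hd => hm (Int.dvd_natAbs.mp (Int.natCast_dvd_natCast.mpr hd))
  have hcop' : Nat.Coprime p m.natAbs := (hp.coprime_iff_not_dvd).mpr hnd
  have hcop : IsCoprime (p : ℤ) m := by
    rw [Int.isCoprime_iff_gcd_eq_one]
    simpa [Int.gcd, Int.natAbs_natCast] using hcop'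
  obtain ⟨u, v, huv⟩ := hcop
  have hx : x = (x ^ p) ^ u * (x ^ m) ^ v := by
    rw [← zpow_natCast x p, ← zpow_mul, ← zpow_mul, ← zpow_add, mul_comm (p : ℤ) u,
      mul_comm m v, huv, zpow_one]
  rw [hx]
  exact mul_mem (zpow_mem hxp u) (zpow_mem hxm v)


theorem coatom_eq_of_le {H K : Subgroup G} (hH : IsCoatom H) (hK : IsCoatom K) (h : H ≤ K) :
    H = K := by
  by_contra hne
  exact hK.1 (hH.2 K (lt_of_le_of_ne h hne))

section Main
variable [Finite G] [Group.IsNilpotent G]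

theorem orderOf_comm (hZ : ∀ a b : G, ⁅a, b⁆ ∈ center G)
    (hmax : ∀ x : G, x ∉ center G → IsCoatom (centralizer ({x} : Set G)))
    {a b : G} (ha : a ∉ center G) (hb : b ∉ centralizer ({a} : Set G)) :
    orderOf ⁅a, b⁆ = (centralizer ({a} : Set G)).index := by
  have hrange : Nat.card ((commHom hZ a).range) = (centralizer ({a} : Set G)).index := by
    rw [← Subgroup.index_ker, commHom_ker]
  have hmem : ⁅a, b⁆ ∈ (commHom hZ a).range := ⟨b, rfl⟩
  have hdvd : orderOf ⁅a, b⁆ ∣ (centralizer ({a} : Set G)).index :=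
    hrange ▸ Subgroup.orderOf_dvd_natCard _ hmem
  have hne : ⁅a, b⁆ ≠ 1 := fun h1 => hb (mem_cen.mpr (commutatorElement_eq_one_iff_commute.mp h1))
  have hp := coatom_prime_index (coatom_normal (hmax a ha)) (hmax a ha)
  rcases hp.eq_one_or_self_of_dvd _ hdvd with h | h
  · exact absurd (orderOf_eq_one_iff.mp h) hne
  · exact h

theorem index_const (hZ : ∀ a b : G, ⁅a, b⁆ ∈ center G)
    (hmax : ∀ x : G, x ∉ center G → IsCoatom (centralizer ({x} : Set G)))
    {x y : G} (hx : x ∉ center G) (hy : y ∉ center G) :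
    (centralizer ({x} : Set G)).index = (centralizer ({y} : Set G)).index := by
  by_cases hCe : centralizer ({x} : Set G) = centralizer ({y} : Set G)
  · rw [hCe]
  have h1 : ¬(centralizer ({x} : Set G) ≤ centralizer ({y} : Set G)) := fun hle =>
    hCe (coatom_eq_of_le (hmax x hx) (hmax y hy) hle)
  have h2 : ¬(centralizer ({y} : Set G) ≤ centralizer ({x} : Set G)) := fun hle =>
    hCe ((coatom_eq_of_le (hmax y hy) (hmax x hx) hle).symm)
  obtain ⟨v, hvY, hvX⟩ := SetLike.not_le_iff_exists.mp h2
  obtain ⟨v', hv'X, hv'Y⟩ := SetLike.not_le_iff_exists.mp h1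
  have hw : x * y ∉ center G := by
    intro hwZ
    apply hCe
    ext u
    rw [mem_cen, mem_cen]
    have h3 := Subgroup.mem_center_iff.mp hwZ u
    constructor
    · intro hxu
      have : x * (u * y) = x * (y * u) := by
        calc x * (u * y) = (x * u) * y := by rw [mul_assoc]
        _ = (u * x) * y := by rw [hxu]
        _ = u * (x * y) := by rw [mul_assoc]
        _ = (x * y) * u := h3
        _ = x * (y * u) := by rw [mul_assoc]
      exact (mul_left_cancel this).symm
    · intro hyu
      have : (x * u) * y = (u * x) * y := by
        calc (x * u) * y = x * (u * y) := by rw [mul_assoc]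
        _ = x * (y * u) := by rw [hyu]
        _ = (x * y) * u := by rw [mul_assoc]
        _ = u * (x * y) := h3.symm
        _ = (u * x) * y := by rw [← mul_assoc]
      exact mul_right_cancel this
  -- v ∉ C (x*y)
  have hvW : v ∉ centralizer ({x * y} : Set G) := by
    intro hv
    have c1 : Commute (x * y) v := mem_cen.mp hv
    have c2 : Commute y v := mem_cen.mp hvY
    have : Commute x v := by
      have h4 : Commute (x * y * y⁻¹) v := c1.mul_left c2.inv_left
      simpa using h4
    exact hvX (mem_cen.mpr this)
  have hv'W : v' ∉ centralizer ({x * y} : Set G) := by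
    intro hv
    have c1 : Commute (x * y) v' := mem_cen.mp hv
    have c2 : Commute x v' := mem_cen.mp hv'X
    have : Commute y v' := by
      have h4 : Commute (x⁻¹ * (x * y)) v' := c2.inv_left.mul_left c1
      simpa using h4
    exact hv'Y (mem_cen.mpr this)
  have e1 : ⁅x * y, v⁆ = ⁅x, v⁆ := by
    rw [comm_mul_left hZ, commutatorElement_eq_one_iff_commute.mpr (mem_cen.mp hvY), mul_one]
  have e2 : ⁅x * y, v'⁆ = ⁅y, v'⁆ := by
    rw [comm_mul_left hZ, commutatorElement_eq_one_iff_commute.mpr (mem_cen.mp hv'X), one_mul]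
  have k1 := orderOf_comm hZ hmax hx hvX
  have k2 := orderOf_comm hZ hmax hw hvW
  have k3 := orderOf_comm hZ hmax hw hv'W
  have k4 := orderOf_comm hZ hmax hy hv'Y
  rw [← k1, ← e1, k2, ← k3, e2, k4]

theorem pow_index_mem_center
    (hmax : ∀ x : G, x ∉ center G → IsCoatom (centralizer ({x} : Set G)))
    {p : ℕ} (hsingle : ∀ g : G, g ∉ center G → (centralizer ({g} : Set G)).index = p)
    (x : G) : x ^ p ∈ center G := by
  rw [Subgroup.mem_center_iff]
  intro g
  by_cases hg : g ∈ center G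
  · exact (Subgroup.mem_center_iff.mp hg (x ^ p)).symm
  · haveI := coatom_normal (hmax g hg)
    have hmem : x ^ p ∈ centralizer ({g} : Set G) := by
      rw [← QuotientGroup.eq_one_iff]
      have : ((x ^ p : G) : G ⧸ centralizer ({g} : Set G)) = ((x : G ⧸ _))^p := by
        push_cast; rfl
      rw [this, ← hsingle g hg]
      have : (centralizer ({g} : Set G)).index = Nat.card (G ⧸ centralizer ({g} : Set G)) := rfl
      rw [this]
      exact pow_card_eq_one'
    exact mem_cen.mp hmem

theorem exists_zpow (hZ : ∀ a b : G, ⁅a, b⁆ ∈ center G)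
    (hmax : ∀ x : G, x ∉ center G → IsCoatom (centralizer ({x} : Set G)))
    {p : ℕ} (hp : p.Prime)
    (hsingle : ∀ g : G, g ∉ center G → (centralizer ({g} : Set G)).index = p)
    {x y : G} (hx : x ∉ center G) (hy : y ∉ center G)
    (hCeq : centralizer ({y} : Set G) = centralizer ({x} : Set G)) :
    ∃ m : ℤ, ∃ z ∈ center G, y = x ^ m * z := by
  by_contra hcon
  push_neg at hcon
  obtain ⟨g, hg⟩ : ∃ g, g ∉ centralizer ({x} : Set G) := by
    by_contra h; push_neg at h; exact (hmax x hx).1 ((Subgroup.eq_top_iff' _).mpr h)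
  have hgZ : g ∉ center G := fun h => hg (Subgroup.center_le_centralizer _ h)
  set φ := commHom hZ g with hφ
  have hrange : Nat.card φ.range = p := by
    rw [← Subgroup.index_ker, commHom_ker]; exact hsingle g hgZ
  have hxg : x ∉ centralizer ({g} : Set G) := fun h => hg (mem_cen.mpr (mem_cen.mp h).symm)
  have hφx : φ x ≠ 1 := by
    intro h1
    have : x ∈ φ.ker := MonoidHom.mem_ker.mpr h1
    rw [hφ, commHom_ker] at this
    exact hxg this
  have hle : Subgroup.zpowers (φ x) ≤ φ.range := Subgroup.zpowers_le.mpr ⟨x, rfl⟩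
  have hord : orderOf (φ x) = p := by
    have hdvd : orderOf (φ x) ∣ p := hrange ▸ Subgroup.orderOf_dvd_natCard φ.range ⟨x, rfl⟩
    rcases hp.eq_one_or_self_of_dvd _ hdvd with h | h
    · exact absurd (orderOf_eq_one_iff.mp h) hφx
    · exact h
  have heq : Subgroup.zpowers (φ x) = φ.range :=
    Subgroup.eq_of_le_of_card_ge hle (by rw [hrange, Nat.card_zpowers, hord])
  have hyr : φ y ∈ φ.range := ⟨y, rfl⟩
  rw [← heq] at hyr
  obtain ⟨m, hm⟩ := Subgroup.mem_zpowers_iff.mp hyr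
  set u := x ^ (-m) * y with hu
  have hunz : u ∉ center G := fun hun => hcon m u hun (by rw [hu]; group)
  have huCg : u ∈ centralizer ({g} : Set G) := by
    have h1 : φ u = 1 := by rw [hu, map_mul, map_zpow, ← hm]; group
    have : u ∈ φ.ker := MonoidHom.mem_ker.mpr h1
    rwa [hφ, commHom_ker] at this
  have hHle : centralizer ({x} : Set G) ≤ centralizer ({u} : Set G) := by
    intro h hh
    have c1 : Commute x h := mem_cen.mp hh
    have c2 : Commute y h := mem_cen.mp (hCeq ▸ hh : h ∈ centralizer ({y} : Set G))
    exact mem_cen.mpr (((c1.zpow_left (-m)).mul_left c2).eq)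
  have hCu := coatom_eq_of_le (hmax x hx) (hmax u hunz) hHle
  apply hg
  rw [hCu]
  exact mem_cen.mpr (mem_cen.mp huCg).symm

end Main

theorem conjugates_eq_singleton {H : Subgroup G} (hN : H.Normal) : conjugates H = {H} := by
  ext K
  simp only [conjugates, Set.mem_setOf_eq, Set.mem_singleton_iff]
  constructor
  · rintro ⟨g, rfl⟩
    ext a
    simp only [Subgroup.mem_map, MulEquiv.coe_toMonoidHom, MulAut.conj_apply]
    constructor
    · rintro ⟨b, hb, rfl⟩
      exact hN.conj_mem b hb g
    · intro ha
      refine ⟨g⁻¹ * a * g, ?_, by group⟩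
      have := hN.conj_mem a ha g⁻¹
      simpa using this
  · rintro rfl
    exact ⟨1, by ext a; simp⟩

theorem numZClasses_eq_numCent
    (hnorm : ∀ x : G, (centralizer ({x} : Set G)).Normal) :
    numZClasses G = numCent G := by
  rw [numZClasses, numCent, cent]
  have h1 : (Set.range fun x : G => conjugates (centralizer {x})) =
      (fun H : Subgroup G => ({H} : Set (Subgroup G))) ''
        (Set.range fun x : G => centralizer ({x} : Set G)) := by
    rw [← Set.range_comp]
    exact congrArg Set.range (funext fun x => conjugates_eq_singleton (hnorm x))
  rw [h1, Set.ncard_image_of_injective _ Set.singleton_injective]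


end Stmt14Aux

open Subgroup Stmt14Aux commutatorElement in
theorem stmt14 (G : Type*) [Group G] [Finite G] [Group.IsNilpotent G]
    (hmax : ∀ x : G, x ∉ Subgroup.center G →
      IsCoatom (Subgroup.centralizer ({x} : Set G))) :
    ∃ (p k : ℕ), p.Prime ∧
      (∀ x : G, x ∉ Subgroup.center G → (Subgroup.centralizer {x}).index = p) ∧
      (Subgroup.center G).index = p ^ k ∧
      numCent G = (p ^ k - 1) / (p - 1) + 1 ∧
      numZClasses G = (p ^ k - 1) / (p - 1) + 1 := by
  classical
  have hnorm : ∀ x : G, (centralizer ({x} : Set G)).Normal := by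
    intro x
    by_cases hx : x ∈ center G
    · rw [cen_eq_top.mpr hx]; infer_instance
    · exact coatom_normal (hmax x hx)
  have hzc : numZClasses G = numCent G := numZClasses_eq_numCent hnorm
  by_cases hab : ∀ x : G, x ∈ Subgroup.center G
  · refine ⟨2, 0, Nat.prime_two, fun x hx => absurd (hab x) hx, ?_, ?_, ?_⟩
    · rw [(Subgroup.eq_top_iff' _).mpr hab, Subgroup.index_top]
      norm_num
    · have hceq : cent G = {(⊤ : Subgroup G)} := by
        ext H
        simp only [cent, Set.mem_range, Set.mem_singleton_iff]
        constructor
        · rintro ⟨x, rfl⟩; exact cen_eq_top.mpr (hab x)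
        · rintro rfl; exact ⟨1, cen_eq_top.mpr (hab 1)⟩
      rw [numCent, hceq, Set.ncard_singleton]
      norm_num
    · rw [hzc]
      have hceq : cent G = {(⊤ : Subgroup G)} := by
        ext H
        simp only [cent, Set.mem_range, Set.mem_singleton_iff]
        constructor
        · rintro ⟨x, rfl⟩; exact cen_eq_top.mpr (hab x)
        · rintro rfl; exact ⟨1, cen_eq_top.mpr (hab 1)⟩
      rw [numCent, hceq, Set.ncard_singleton]
      norm_num
  · push_neg at hab
    obtain ⟨x₀, hx₀⟩ := hab
    have hZ : ∀ a b : G, ⁅a, b⁆ ∈ Subgroup.center G := comm_mem_center hmax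
    set p := (Subgroup.centralizer ({x₀} : Set G)).index with hpdef
    have hp : p.Prime := coatom_prime_index (coatom_normal (hmax x₀ hx₀)) (hmax x₀ hx₀)
    have hsingle : ∀ g : G, g ∉ Subgroup.center G →
        (Subgroup.centralizer ({g} : Set G)).index = p :=
      fun g hg => index_const hZ hmax hg hx₀
    have hxp : ∀ x : G, x ^ p ∈ Subgroup.center G := pow_index_mem_center hmax hsingle
    haveI : Fact p.Prime := ⟨hp⟩
    have hpg : IsPGroup p (G ⧸ Subgroup.center G) := by
      intro q
      refine ⟨1, ?_⟩
      obtain ⟨x, rfl⟩ := QuotientGroup.mk_surjective q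
      rw [pow_one]
      have h1 : ((x : G ⧸ Subgroup.center G)) ^ p = ((x ^ p : G) : G ⧸ Subgroup.center G) := rfl
      rw [h1]
      exact (QuotientGroup.eq_one_iff _).mpr (hxp x)
    obtain ⟨k, hk⟩ := hpg.exists_card_eq
    have hZindex : (Subgroup.center G).index = p ^ k := hk
    refine ⟨p, k, hp, hsingle, hZindex, ?_, ?_⟩
    -- numCent
    all_goals try rw [hzc]
    all_goals {
    haveI : Fintype G := Fintype.ofFinite G
    set Zs : Finset G := Finset.univ.filter (· ∈ Subgroup.center G) with hZs
    set T : Finset G := Finset.univ.filter (· ∉ Subgroup.center G) with hT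
    have hZcard : Zs.card = Nat.card (Subgroup.center G) := by
      rw [Nat.card_eq_fintype_card]
      exact (Fintype.card_subtype _).symm
    have hZpos : 0 < Zs.card :=
      Finset.card_pos.mpr ⟨1, by simp [hZs, Subgroup.one_mem]⟩
    -- fiber cardinality
    have hfiber : ∀ x : G, x ∉ Subgroup.center G →
        (T.filter fun y => Subgroup.centralizer ({y} : Set G) =
          Subgroup.centralizer ({x} : Set G)).card = (p - 1) * Zs.card := by
      intro x hx
      have hnd' : ∀ i j : ℕ, 1 ≤ i → i < p → 1 ≤ j → j < p → i ≠ j →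
          ¬((p : ℤ) ∣ ((i : ℤ) - (j : ℤ))) := by
        intro i j h1 h2 h3 h4 hij hdvd
        have h5 := Int.eq_zero_of_dvd_of_natAbs_lt_natAbs hdvd (by omega)
        omega
      have himg : (T.filter fun y => Subgroup.centralizer ({y} : Set G) =
            Subgroup.centralizer ({x} : Set G)) =
          ((Finset.Ico 1 p) ×ˢ Zs).image (fun iz => x ^ iz.1 * iz.2) := by
        ext y
        simp only [Finset.mem_filter, Finset.mem_image, Finset.mem_product, Finset.mem_Ico,
          hT, hZs, Finset.mem_univ, true_and]
        constructor
        · rintro ⟨hyZ, hCeq⟩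
          obtain ⟨m, z, hzZ, hyeq⟩ := exists_zpow hZ hmax hp hsingle hx hyZ hCeq
          set i : ℕ := (m % (p : ℤ)).toNat with hi
          have hp0 : (0 : ℤ) < (p : ℤ) := by exact_mod_cast hp.pos
          have hmod_nonneg : 0 ≤ m % (p : ℤ) := Int.emod_nonneg m hp0.ne'
          have hmod_lt : m % (p : ℤ) < p := Int.emod_lt_of_pos m hp0
          have hicast : (i : ℤ) = m % (p : ℤ) := Int.toNat_of_nonneg hmod_nonneg
          have hilt : i < p := by omega
          have hdiv : x ^ ((m - (i : ℤ))) ∈ Subgroup.center G := by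
            have he : m - (i : ℤ) = (p : ℤ) * (m / (p : ℤ)) := by
              rw [hicast, Int.emod_def]; ring
            rw [he, zpow_mul, zpow_natCast]
            exact Subgroup.zpow_mem _ (hxp x) _
          have hine : 1 ≤ i := by
            rcases Nat.eq_zero_or_pos i with h0 | h1
            · exfalso
              apply hyZ
              rw [hyeq]
              have h2 := hdiv
              rw [h0] at h2
              simp only [Nat.cast_zero, sub_zero] at h2
              exact Subgroup.mul_mem _ h2 hzZ
            · exact h1
          refine ⟨(i, x ^ ((m - (i : ℤ))) * z), ⟨⟨hine, hilt⟩, ?_⟩, ?_⟩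
          · exact Subgroup.mul_mem _ hdiv hzZ
          · rw [hyeq, ← mul_assoc]
            congr 1
            rw [← zpow_natCast x i, ← zpow_add]
            congr 1
            ring
        · rintro ⟨⟨i, z⟩, ⟨⟨h1i, hip⟩, hzZ⟩, heq⟩
          have hndvd : ¬((p : ℤ) ∣ (i : ℤ)) := by
            intro hdvd
            have : (p : ℕ) ∣ i := by exact_mod_cast hdvd
            have := Nat.le_of_dvd (by omega) this
            omega
          have hyZ : y ∉ Subgroup.center G := by
            intro hyc
            apply hx
            refine bezout_mem hp _ (hxp x) hndvd ?_
            rw [zpow_natCast]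
            have : x ^ i = y * z⁻¹ := by rw [← heq]; group
            rw [this]
            exact Subgroup.mul_mem _ hyc (Subgroup.inv_mem _ hzZ)
          refine ⟨hyZ, ?_⟩
          ext w
          rw [mem_cen, mem_cen]
          constructor
          · intro hwY
            have c1 : Commute y w := hwY
            have c2 : Commute z w := (Subgroup.mem_center_iff.mp hzZ w).symm
            have c3 : Commute (x ^ i) w := by
              have : (x : G) ^ i = y * z⁻¹ := by rw [← heq]; group
              rw [this]
              exact c1.mul_left c2.inv_left
            have c4 : Commute (x ^ p) w := (Subgroup.mem_center_iff.mp (hxp x) w).symm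
            have hxw : x ∈ Subgroup.centralizer ({w} : Set G) := by
              refine bezout_mem hp _ ?_ hndvd ?_
              · exact mem_cen.mpr c4.eq.symm
              · rw [zpow_natCast]
                exact mem_cen.mpr c3.eq.symm
            exact (mem_cen.mp hxw).symm
          · intro hwX
            have c1 : Commute x w := hwX
            have c2 : Commute z w := (Subgroup.mem_center_iff.mp hzZ w).symm
            have c3 : Commute y w := by
              rw [← heq]
              exact (c1.pow_left i).mul_left c2
            exact c3.eq
      have hinj : Set.InjOn (fun iz : ℕ × G => x ^ iz.1 * iz.2)
          ↑((Finset.Ico 1 p) ×ˢ Zs) := by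
        rintro ⟨i, z⟩ hm1 ⟨j, z'⟩ hm2 heqq
        simp only [Finset.coe_product, Set.mem_prod, Finset.mem_coe, Finset.mem_Ico,
          hZs, Finset.mem_filter, Finset.mem_univ, true_and] at hm1 hm2
        obtain ⟨⟨h1i, hip⟩, hzZ⟩ := hm1
        obtain ⟨⟨h1j, hjp⟩, hz'Z⟩ := hm2
        simp only at heqq
        have hij : i = j := by
          by_contra hij
          have hc' : ∀ a : G, a * (z' * z⁻¹) = (z' * z⁻¹) * a := fun a =>
            Subgroup.mem_center_iff.mp (Subgroup.mul_mem _ hz'Z (Subgroup.inv_mem _ hzZ)) a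
          have h2 : x ^ ((i : ℤ) - (j : ℤ)) = z' * z⁻¹ := by
            have h1' : (x : G) ^ i = x ^ j * (z' * z⁻¹) := by
              rw [← mul_assoc, ← heqq]; group
            rw [zpow_sub, zpow_natCast, zpow_natCast, h1', hc' (x ^ j)]
            simp [mul_assoc]
          have hzz : x ^ ((i : ℤ) - (j : ℤ)) ∈ Subgroup.center G := by
            rw [h2]
            exact Subgroup.mul_mem _ hz'Z (Subgroup.inv_mem _ hzZ)
          have hnd : ¬((p : ℤ) ∣ ((i : ℤ) - (j : ℤ))) := hnd' i j h1i hip h1j hjp hij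
          exact hx (bezout_mem hp _ (hxp x) hnd hzz)
        subst hij
        have : z = z' := by
          have := heqq
          exact mul_left_cancel this
        rw [this]
      rw [himg, Finset.card_image_of_injOn hinj, Finset.card_product, Nat.card_Ico]
    -- sum over fibers
    have hsum : T.card = (T.image fun y => Subgroup.centralizer ({y} : Set G)).card *
        ((p - 1) * Zs.card) := by
      have hterm : ∀ H ∈ (T.image fun y => Subgroup.centralizer ({y} : Set G)),
          (T.filter fun y => Subgroup.centralizer ({y} : Set G) = H).card =
            (p - 1) * Zs.card := by
        intro H hH
        obtain ⟨x, hxT, rfl⟩ := Finset.mem_image.mp hH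
        have hx : x ∉ Subgroup.center G := by
          rw [hT] at hxT
          exact (Finset.mem_filter.mp hxT).2
        exact hfiber x hx
      rw [Finset.card_eq_sum_card_fiberwise
        (fun y hy => Finset.mem_image_of_mem (fun y => Subgroup.centralizer ({y} : Set G)) hy),
        Finset.sum_congr rfl hterm, Finset.sum_const, smul_eq_mul]
    have hTcard : T.card + Zs.card = Fintype.card G := by
      have h := Finset.card_filter_add_card_filter_not
        (s := (Finset.univ : Finset G)) (p := fun y => y ∈ Subgroup.center G)
      rw [Finset.card_univ] at h
      rw [hT, hZs]
      omega
    have hG : Fintype.card G = Zs.card * p ^ k := by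
      rw [← Nat.card_eq_fintype_card, ← Subgroup.card_mul_index (Subgroup.center G), hZindex,
        hZcard]
    have hNcard : (T.image fun y => Subgroup.centralizer ({y} : Set G)).card * (p - 1) =
        p ^ k - 1 := by
      have h1 : (T.image fun y => Subgroup.centralizer ({y} : Set G)).card *
          ((p - 1) * Zs.card) = (p ^ k - 1) * Zs.card := by
        rw [← hsum]
        have h2 : (p ^ k - 1) * Zs.card = Zs.card * p ^ k - Zs.card := by
          rw [Nat.sub_mul, one_mul, mul_comm]
        omega
      have h3 : (T.image fun y => Subgroup.centralizer ({y} : Set G)).card * (p - 1) * Zs.card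
          = (p ^ k - 1) * Zs.card := by
        rw [mul_assoc]
        exact h1
      exact Nat.eq_of_mul_eq_mul_right hZpos h3
    have hdiveq : (p ^ k - 1) / (p - 1) =
        (T.image fun y => Subgroup.centralizer ({y} : Set G)).card := by
      rw [← hNcard, Nat.mul_div_cancel _ (by have := hp.two_le; omega)]
    have hcent : cent G = insert (⊤ : Subgroup G)
        (↑(T.image fun y => Subgroup.centralizer ({y} : Set G)) : Set (Subgroup G)) := by
      ext H
      simp only [cent, Set.mem_range, Set.mem_insert_iff, Finset.coe_image, Set.mem_image,
        Finset.mem_coe]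
      constructor
      · rintro ⟨x, rfl⟩
        by_cases hxZ : x ∈ Subgroup.center G
        · left; exact cen_eq_top.mpr hxZ
        · right; exact ⟨x, by simp [hT, hxZ], rfl⟩
      · rintro (rfl | ⟨x, hxT, rfl⟩)
        · exact ⟨1, cen_eq_top.mpr (Subgroup.one_mem _)⟩
        · exact ⟨x, rfl⟩
    have htopnot : (⊤ : Subgroup G) ∉
        (↑(T.image fun y => Subgroup.centralizer ({y} : Set G)) : Set (Subgroup G)) := by
      intro hmem
      simp only [Finset.coe_image, Set.mem_image, Finset.mem_coe] at hmem
      obtain ⟨x, hxT, hCx⟩ := hmem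
      have hx : x ∉ Subgroup.center G := by
        rw [hT] at hxT
        exact (Finset.mem_filter.mp hxT).2
      exact (hmax x hx).1 hCx
    rw [numCent, hcent, Set.ncard_insert_of_notMem htopnot (Set.toFinite _),
      Set.ncard_coe_finset, hdiveq]
    }
end
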